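/- arXiv:1604.01928 — 7 statements merged into one kernel-verified Lean document; each statement's English description precedes it below -/
import Mathlib

section
/- (Lemma 1, State-Variable Filter regression.) Let N ≥ 1, let u(t) = Σ_{i=1}^N A_i sin(ω_i t + φ_i) with A_i > 0, ω_i > 0 pairwise distinct and φ_i ∈ ℝ, and let θ ∈ ℝ^N be defined by ∏_{i=1}^N (X² + ω_i²) = X^{2N} + Σ_{j=1}^N θ_j X^{2(N−j)}. Let a_0,…,a_{2N−1} ∈ ℝ be such that every complex root of a(s) = s^{2N} + a_{2N−1} s^{2N−1} + … + a_1 s + a_0 has strictly negative real part. Suppose ξ : ℝ → ℝ^{2N} is differentiable on [0,∞) and satisfies the companion-form state-variable filter equations ξ_k'(t) = ξ_{k+1}(t) for k = 1,…,2N−1 and ξ_{2N}'(t) = −Σ_{k=1}^{2N} a_{k−1} ξ_k(t) + a_0 u(t) for all t ≥ 0. Define y(t) = Σ_{k=1}^{2N} a_{k−1} ξ_k(t) − a_0 u(t) and φ(t) ∈ ℝ^N by φ_j(t) = ξ_{2(N−j)+1}(t) for j = 1,…,N. Then there exist constants C ≥ 0 and λ > 0 such that |y(t) − φ(t)ᵀθ|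 ≤ C e^{−λ t} for all t ≥ 0. -/
open Polynomial



open Real

private lemma exp_mul_exp (x y z : ℝ) (h : x + y = z) :
    Real.exp x * Real.exp y = Real.exp z := by rw [← Real.exp_add, h]

lemma decay_aux (v v' : ℝ → ℂ) (l : ℂ) (hl : l.re < 0)
    (C μ : ℝ) (hC : 0 ≤ C) (hμ : 0 < μ)
    (hv : ∀ t ≥ (0:ℝ), HasDerivAt v (v' t) t)
    (hf : ∀ t ≥ (0:ℝ), ‖v' t - l * v t‖ ≤ C * Real.exp (-μ * t)) :
    ∃ C' ≥ (0:ℝ), ∃ μ' > (0:ℝ), ∀ t ≥ (0:ℝ), ‖v t‖ ≤ C' * Real.exp (-μ' * t) := by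
  set μ₀ : ℝ := min μ (-l.re / 2) with hμ₀def
  have hμ₀ : 0 < μ₀ := lt_min hμ (by linarith)
  have hμ₀μ : μ₀ ≤ μ := min_le_left _ _
  have hμ₀l : μ₀ ≤ -l.re / 2 := min_le_right _ _
  set ν : ℝ := -l.re - μ₀ with hνdef
  have hν : 0 ≤ ν := by simp only [hνdef]; linarith
  set g : ℝ → ℂ := fun t => Complex.exp (-l * t) * v t with hgdef
  have hre : ∀ (c : ℂ) (t : ℝ), (c * (t:ℂ)).re = c.re * t := by
    intro c t; simp [Complex.mul_re]
  have hg : ∀ t ≥ (0:ℝ), HasDerivAt g (Complex.exp (-l*t) * (v' t - l * v t)) t := by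
    intro t ht
    have h1 : HasDerivAt (fun z : ℂ => Complex.exp (-l * z)) (-l * Complex.exp (-l * t)) (t:ℂ) := by
      have := (Complex.hasDerivAt_exp (-l * t)).comp (t:ℂ)
        ((hasDerivAt_id (t:ℂ)).const_mul (-l))
      simpa [Function.comp_def, mul_comm] using this
    have h2 : HasDerivAt (fun s : ℝ => Complex.exp (-l * s)) (-l * Complex.exp (-l * t)) t :=
      h1.comp_ofReal
    have := h2.mul (hv t ht)
    convert this using 1
    · rfl
    · rfl
    · ring
  refine ⟨‖v 0‖ + 2 * C / μ₀, add_nonneg (norm_nonneg _)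
    (div_nonneg (by linarith) hμ₀.le), μ₀ / 2, by positivity, ?_⟩
  intro T hT
  have hK : ∀ t ∈ Set.Icc (0:ℝ) T,
      ‖Complex.exp (-l*t) * (v' t - l * v t)‖ ≤ C * Real.exp (ν * T) := by
    intro t ht
    rw [norm_mul, Complex.norm_exp, hre, Complex.neg_re]
    calc Real.exp (-l.re * t) * ‖v' t - l * v t‖
        ≤ Real.exp (-l.re * t) * (C * Real.exp (-μ * t)) :=
          mul_le_mul_of_nonneg_left (hf t ht.1) (Real.exp_nonneg _)
      _ = C * (Real.exp (-l.re * t) * Real.exp (-μ * t)) := by ring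
      _ = C * Real.exp ((-l.re - μ) * t) := by
          rw [exp_mul_exp (-l.re * t) (-μ * t) ((-l.re - μ) * t) (by ring)]
      _ ≤ C * Real.exp (ν * T) := by
          apply mul_le_mul_of_nonneg_left _ hC
          apply Real.exp_le_exp.2
          nlinarith [mul_nonneg hν (sub_nonneg.2 ht.2),
            mul_nonneg (sub_nonneg.2 (show -l.re - μ ≤ ν by simp only [hνdef]; linarith)) ht.1]
  have hmv : ‖g T - g 0‖ ≤ C * Real.exp (ν * T) * ‖T - 0‖ :=
    (convex_Icc (0:ℝ) T).norm_image_sub_le_of_norm_hasDerivWithin_le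
      (fun t ht => ((hg t ht.1).hasDerivWithinAt)) hK
      (Set.left_mem_Icc.2 hT) (Set.right_mem_Icc.2 hT)
  have hg0 : g 0 = v 0 := by simp [hgdef]
  have hgT : ‖g T‖ ≤ ‖v 0‖ + C * Real.exp (ν * T) * T := by
    have htri : ‖g T‖ ≤ ‖g 0‖ + ‖g T - g 0‖ := by
      simpa using norm_add_le (g 0) (g T - g 0)
    have hnT : ‖T - (0:ℝ)‖ = T := by rw [sub_zero, Real.norm_eq_abs, abs_of_nonneg hT]
    rw [hnT] at hmv
    have hg0n : ‖g 0‖ = ‖v 0‖ := by rw [hg0]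
    linarith
  have hvT : ‖v T‖ = Real.exp (l.re * T) * ‖g T‖ := by
    have hone : Complex.exp (l * T) * Complex.exp (-l * T) = 1 := by
      rw [← Complex.exp_add]; ring_nf; exact Complex.exp_zero
    have hvg : v T = Complex.exp (l * T) * g T := by
      simp only [hgdef]; rw [← mul_assoc, hone, one_mul]
    rw [hvg, norm_mul, Complex.norm_exp, hre]
  rw [hvT]
  have e1 : Real.exp (l.re * T) * Real.exp (ν * T) = Real.exp (-μ₀ * T) :=
    exp_mul_exp _ _ _ (by simp only [hνdef]; ring)
  have key : Real.exp (l.re * T) * ‖g T‖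
      ≤ Real.exp (l.re*T) * ‖v 0‖ + C * T * Real.exp (-μ₀ * T) := by
    calc Real.exp (l.re * T) * ‖g T‖
        ≤ Real.exp (l.re*T) * (‖v 0‖ + C * Real.exp (ν*T) * T) :=
          mul_le_mul_of_nonneg_left hgT (Real.exp_nonneg _)
      _ = Real.exp (l.re*T) * ‖v 0‖ + C * T * (Real.exp (l.re*T) * Real.exp (ν*T)) := by ring
      _ = Real.exp (l.re*T) * ‖v 0‖ + C * T * Real.exp (-μ₀ * T) := by rw [e1]
  have h7 : Real.exp (l.re * T) ≤ Real.exp (-(μ₀/2) * T) := by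
    apply Real.exp_le_exp.2; nlinarith
  have h9 : T ≤ 2/μ₀ * Real.exp (μ₀/2 * T) := by
    rw [div_mul_eq_mul_div, le_div_iff₀ hμ₀]
    nlinarith [Real.add_one_le_exp (μ₀/2 * T)]
  have e2 : Real.exp (μ₀/2 * T) * Real.exp (-μ₀ * T) = Real.exp (-(μ₀/2) * T) :=
    exp_mul_exp _ _ _ (by ring)
  have h8 : C * T * Real.exp (-μ₀ * T) ≤ (2*C/μ₀) * Real.exp (-(μ₀/2) * T) := by
    calc C * T * Real.exp (-μ₀ * T)
        ≤ C * (2/μ₀ * Real.exp (μ₀/2 * T)) * Real.exp (-μ₀*T) :=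
          mul_le_mul_of_nonneg_right (mul_le_mul_of_nonneg_left h9 hC) (Real.exp_nonneg _)
      _ = (2*C/μ₀) * (Real.exp (μ₀/2 * T) * Real.exp (-μ₀*T)) := by ring
      _ = (2*C/μ₀) * Real.exp (-(μ₀/2) * T) := by rw [e2]
  calc Real.exp (l.re * T) * ‖g T‖
      ≤ Real.exp (l.re*T) * ‖v 0‖ + C*T*Real.exp (-μ₀*T) := key
    _ ≤ Real.exp (-(μ₀/2)*T) * ‖v 0‖ + (2*C/μ₀)*Real.exp (-(μ₀/2)*T) := by
        have := mul_le_mul_of_nonneg_right h7 (norm_nonneg (v 0)); linarith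
    _ = (‖v 0‖ + 2*C/μ₀) * Real.exp (-(μ₀/2) * T) := by ring


noncomputable def opApply : List ℂ → (ℕ → ℝ → ℂ) → ℝ → ℂ
  | [], W => W 0
  | l :: L, W => opApply L (fun k t => W (k+1) t - l * W k t)

lemma natDegree_list_prod_XC_le (L : List ℂ) :
    ((L.map fun l => X - C l).prod).natDegree ≤ L.length := by
  induction L with
  | nil => simp
  | cons l L ih =>
    simp only [List.map_cons, List.prod_cons, List.length_cons]
    calc ((X - C l) * (L.map fun l => X - C l).prod).natDegree
        ≤ (X - C l).natDegree + ((L.map fun l => X - C l).prod).natDegree :=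
          natDegree_mul_le
      _ ≤ 1 + L.length := add_le_add (natDegree_X_sub_C_le l) ih
      _ = L.length + 1 := by omega

lemma opApply_coeff (L : List ℂ) (W : ℕ → ℝ → ℂ) (t : ℝ) :
    opApply L W t = ∑ k ∈ Finset.range (L.length + 1),
      ((L.map fun l => X - C l).prod).coeff k * W k t := by
  induction L generalizing W with
  | nil => simp [opApply]
  | cons l L ih =>
    set q := (L.map fun l => X - C l).prod with hq
    set m := L.length with hm
    have h1 : opApply (l :: L) W t
        = ∑ k ∈ Finset.range (m + 1), q.coeff k * (W (k+1) t - l * W k t) := by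
      rw [opApply]; exact ih _
    rw [h1]
    have h2 : ∀ k, ((X - C l) * q).coeff k = (X * q).coeff k - l * q.coeff k := by
      intro k
      rw [sub_mul, coeff_sub, coeff_C_mul]
    have h3 : ∑ k ∈ Finset.range (m + 1 + 1), (X * q).coeff k * W k t
        = ∑ k ∈ Finset.range (m + 1), q.coeff k * W (k+1) t := by
      rw [Finset.sum_range_succ']
      simp [coeff_X_mul, mul_coeff_zero]
    have h4 : ∑ k ∈ Finset.range (m + 1 + 1), l * q.coeff k * W k t
        = ∑ k ∈ Finset.range (m + 1), l * q.coeff k * W k t := by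
      rw [Finset.sum_range_succ]
      have : q.coeff (m+1) = 0 :=
        coeff_eq_zero_of_natDegree_lt (Nat.lt_succ_of_le (natDegree_list_prod_XC_le L))
      simp [this]
    rw [List.map_cons, List.prod_cons, List.length_cons, ← hq, ← hm]
    have h5 : ∑ k ∈ Finset.range (m + 1 + 1), ((X - C l) * q).coeff k * W k t
        = ∑ k ∈ Finset.range (m + 1 + 1), ((X * q).coeff k * W k t - l * q.coeff k * W k t) := by
      apply Finset.sum_congr rfl; intro k _; rw [h2]; ring
    rw [h5, Finset.sum_sub_distrib, h3, h4, ← Finset.sum_sub_distrib]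
    apply Finset.sum_congr rfl; intro k _; ring
lemma opDecay (L : List ℂ) (hL : ∀ l ∈ L, l.re < 0) (W : ℕ → ℝ → ℂ)
    (hW : ∀ k, ∀ t ≥ (0:ℝ), HasDerivAt (fun s => W k s) (W (k+1) t) t)
    (h0 : ∀ t ≥ (0:ℝ), opApply L W t = 0) :
    ∃ C ≥ (0:ℝ), ∃ μ > (0:ℝ), ∀ t ≥ (0:ℝ), ‖W 0 t‖ ≤ C * Real.exp (-μ * t) := by
  induction L generalizing W with
  | nil =>
    refine ⟨0, le_refl 0, 1, one_pos, fun t ht => ?_⟩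
    have := h0 t ht
    rw [opApply] at this
    rw [this]
    simp
  | cons l L ih =>
    set W' : ℕ → ℝ → ℂ := fun k t => W (k+1) t - l * W k t with hW'def
    have hW' : ∀ k, ∀ t ≥ (0:ℝ), HasDerivAt (fun s => W' k s) (W' (k+1) t) t := by
      intro k t ht
      exact (hW (k+1) t ht).sub ((hW k t ht).const_mul l)
    have h0' : ∀ t ≥ (0:ℝ), opApply L W' t = 0 := by
      intro t ht
      have := h0 t ht
      rwa [opApply] at this
    obtain ⟨C, hC, μ, hμ, hdec⟩ := ih (fun x hx => hL x (List.mem_cons_of_mem l hx)) W' hW' h0'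
    exact decay_aux (W 0) (W 1) l (hL l List.mem_cons_self) C μ hC hμ (hW 0)
      (fun t ht => by simpa using hdec t ht)

open Real

noncomputable def Usvf {N : ℕ} (A ph ω : Fin N → ℝ) (n : ℕ) (t : ℝ) : ℝ :=
  ∑ i, A i * ω i ^ n * Real.sin (ω i * t + ph i + n * (Real.pi / 2))

lemma Usvf_deriv {N : ℕ} (A ph ω : Fin N → ℝ) (n : ℕ) (t : ℝ) :
    HasDerivAt (fun s => Usvf A ph ω n s) (Usvf A ph ω (n+1) t) t := by
  unfold Usvf
  apply HasDerivAt.fun_sum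
  intro i _
  have h1 : HasDerivAt (fun s : ℝ => Real.sin (ω i * s + ph i + n * (π/2)))
      (Real.cos (ω i * t + ph i + n * (π/2)) * (ω i * 1)) t :=
    HasDerivAt.sin ((((hasDerivAt_id t).const_mul (ω i)).add_const (ph i)).add_const _)
  have h2 := h1.const_mul (A i * ω i ^ n)
  convert h2 using 1
  · rfl
  push_cast
  rw [show (ω i * t + ph i + ((n:ℝ) + 1) * (π / 2))
      = (ω i * t + ph i + (n:ℝ) * (π / 2)) + π/2 by ring, Real.sin_add_pi_div_two]
  ring

lemma Usvf_even {N : ℕ} (A ph ω : Fin N → ℝ) (m : ℕ) (t : ℝ) :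
    Usvf A ph ω (2*m) t = ∑ i, A i * ((-1)^m * ω i ^ (2*m)) * Real.sin (ω i * t + ph i) := by
  unfold Usvf
  apply Finset.sum_congr rfl
  intro i _
  have h1 : ((2*m : ℕ) : ℝ) * (π/2) = (m : ℤ) * π := by push_cast; ring
  rw [h1, Real.sin_add_int_mul_pi, zpow_natCast]
  ring

noncomputable def Xi (M : ℕ) (a : ℕ → ℝ) (U : ℕ → ℝ → ℝ) (ξ : ℝ → ℕ → ℝ) :
    ℕ → ℝ → ℕ → ℝ
  | 0 => ξ
  | n+1 => fun t k => if k + 1 < M then Xi M a U ξ n t (k+1)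
      else -(∑ j ∈ Finset.range M, a j * Xi M a U ξ n t j) + a 0 * U n t

lemma Xi_zero (M : ℕ) (a : ℕ → ℝ) (U : ℕ → ℝ → ℝ) (ξ : ℝ → ℕ → ℝ) :
    Xi M a U ξ 0 = ξ := rfl

lemma Xi_succ (M : ℕ) (a : ℕ → ℝ) (U : ℕ → ℝ → ℝ) (ξ : ℝ → ℕ → ℝ) (n : ℕ) (t : ℝ) (k : ℕ) :
    Xi M a U ξ (n+1) t k = if k + 1 < M then Xi M a U ξ n t (k+1)
      else -(∑ j ∈ Finset.range M, a j * Xi M a U ξ n t j) + a 0 * U n t := rfl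

variable {M : ℕ} {a : ℕ → ℝ} {U : ℕ → ℝ → ℝ} {ξ : ℝ → ℕ → ℝ}

lemma Xi_L1 : ∀ n k, k + n < M → ∀ t, Xi M a U ξ n t k = ξ t (k + n) := by
  intro n
  induction n with
  | zero => intro k _ t; simp [Xi_zero]
  | succ n ih =>
    intro k hk t
    rw [Xi_succ, if_pos (by omega), ih (k+1) (by omega)]
    congr 1; omega

lemma Xi_L3 : ∀ n k, k < M → M ≤ k + n → ∀ t,
    Xi M a U ξ n t k = Xi M a U ξ (k + n - (M-1)) t (M-1) := by
  intro n
  induction n with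
  | zero => intro k h1 h2; omega
  | succ n ih =>
    intro k h1 h2 t
    by_cases hk : k + 1 < M
    · rw [Xi_succ, if_pos hk, ih (k+1) hk (by omega)]
      congr 1; omega
    · have hkM : k = M - 1 := by omega
      have : k + (n+1) - (M-1) = n + 1 := by omega
      rw [this, hkM]

lemma Xi_L4 (hM : 1 ≤ M) (n : ℕ) (t : ℝ) :
    Xi M a U ξ (n+1) t (M-1)
      = -(∑ j ∈ Finset.range M, a j * Xi M a U ξ n t j) + a 0 * U n t := by
  rw [Xi_succ, if_neg (by omega)]

lemma Xi_L5 : ∀ m k, k < M → ∀ t, Xi M a U ξ m t k = Xi M a U ξ (m + k) t 0 := by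
  intro m k hk t
  by_cases h : k + m < M
  · rw [Xi_L1 m k h, Xi_L1 (m+k) 0 (by omega)]
    congr 1; omega
  · rw [Xi_L3 m k hk (by omega), Xi_L3 (m+k) 0 (by omega) (by omega)]
    congr 1; omega

lemma Xi_G (hM : 1 ≤ M) (m : ℕ) (t : ℝ) :
    Xi M a U ξ (M + m) t 0
      = -(∑ j ∈ Finset.range M, a j * Xi M a U ξ (m + j) t 0) + a 0 * U m t := by
  have h1 : Xi M a U ξ (M + m) t 0 = Xi M a U ξ (m+1) t (M-1) := by
    rw [Xi_L3 (M+m) 0 (by omega) (by omega)]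
    congr 1; omega
  rw [h1, Xi_L4 hM]
  congr 2
  apply Finset.sum_congr rfl
  intro j hj
  rw [Xi_L5 m j (Finset.mem_range.1 hj)]

lemma Xi_deriv (hM : 1 ≤ M)
    (hξd : ∀ k, k+1 < M → ∀ t ≥ (0:ℝ), HasDerivAt (fun s => ξ s k) (ξ t (k+1)) t)
    (hlast : ∀ t ≥ (0:ℝ), HasDerivAt (fun s => ξ s (M-1))
      (-(∑ j ∈ Finset.range M, a j * ξ t j) + a 0 * U 0 t) t)
    (hU : ∀ n t, HasDerivAt (fun s => U n s) (U (n+1) t) t) :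
    ∀ n k, k < M → ∀ t ≥ (0:ℝ),
      HasDerivAt (fun s => Xi M a U ξ n s k) (Xi M a U ξ (n+1) t k) t := by
  intro n
  induction n with
  | zero =>
    intro k hk t ht
    by_cases h : k + 1 < M
    · rw [Xi_succ, if_pos h]
      exact hξd k h t ht
    · have hkM : k = M - 1 := by omega
      subst hkM
      rw [Xi_succ, if_neg (by omega)]
      simp only [Xi_zero]
      exact hlast t ht
  | succ n ih =>
    intro k hk t ht
    by_cases h : k + 1 < M
    · have e1 : (fun s => Xi M a U ξ (n+1) s k) = fun s => Xi M a U ξ n s (k+1) := by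
        funext s; rw [Xi_succ, if_pos h]
      have e2 : Xi M a U ξ (n+1+1) t k = Xi M a U ξ (n+1) t (k+1) := by
        rw [Xi_succ, if_pos h]
      rw [e1, e2]
      exact ih (k+1) h t ht
    · have e1 : (fun s => Xi M a U ξ (n+1) s k)
          = fun s => -(∑ j ∈ Finset.range M, a j * Xi M a U ξ n s j) + a 0 * U n s := by
        funext s; rw [Xi_succ, if_neg h]
      have e2 : Xi M a U ξ (n+1+1) t k
          = -(∑ j ∈ Finset.range M, a j * Xi M a U ξ (n+1) t j) + a 0 * U (n+1) t := by
        rw [Xi_succ, if_neg h]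
      rw [e1, e2]
      exact (HasDerivAt.fun_sum (fun j hj =>
        (ih j (Finset.mem_range.1 hj) t ht).const_mul (a j))).neg.add
        ((hU n t).const_mul (a 0))

/-- Lemma 1, State-Variable Filter regression: the SVF output
`y(t) = Σ a_{k-1} ξ_k(t) - a_0 u(t)` satisfies `y(t) = φ(t)ᵀθ + ε(t)` with `ε`
exponentially decaying, where `φ_j(t) = ξ_{2(N-j)+1}(t)` and `θ` is the coefficient
vector of `∏ (X² + ω_i²)`. -/
theorem statement1 (N : ℕ) (hN : 1 ≤ N) (A ph ω : Fin N → ℝ)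
    (hA : ∀ i, A i > 0) (hω : ∀ i, ω i > 0) (hdist : Function.Injective ω)
    (u : ℝ → ℝ) (hu : ∀ t, u t = ∑ i, A i * Real.sin (ω i * t + ph i))
    (θ : Fin N → ℝ)
    (hθ : (∏ i, (Polynomial.X ^ 2 + Polynomial.C ((ω i) ^ 2)) : Polynomial ℝ) =
      Polynomial.X ^ (2 * N) +
        ∑ j : Fin N, Polynomial.C (θ j) * Polynomial.X ^ (2 * (N - 1 - j.val)))
    (a : Fin (2 * N) → ℝ)
    (hHurwitz : ∀ z : ℂ,
      z ^ (2 * N) + ∑ k : Fin (2 * N), (a k : ℂ) * z ^ (k : ℕ) = 0 → z.re < 0)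
    (ξ : ℝ → Fin (2 * N) → ℝ)
    (hξ : ∀ (k : Fin (2 * N)) (hk : (k : ℕ) + 1 < 2 * N) (t : ℝ), 0 ≤ t →
      HasDerivAt (fun s => ξ s k) (ξ t ⟨(k : ℕ) + 1, hk⟩) t)
    (hξlast : ∀ t : ℝ, 0 ≤ t →
      HasDerivAt (fun s => ξ s ⟨2 * N - 1, by omega⟩)
        (-(∑ k : Fin (2 * N), a k * ξ t k) + a ⟨0, by omega⟩ * u t) t)
    (y : ℝ → ℝ)
    (hy : ∀ t, y t = ∑ k : Fin (2 * N), a k * ξ t k - a ⟨0, by omega⟩ * u t)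
    (φ : ℝ → Fin N → ℝ)
    (hφ : ∀ t (j : Fin N), φ t j = ξ t ⟨2 * (N - 1 - (j : ℕ)), by omega⟩) :
    ∃ C ≥ (0 : ℝ), ∃ lam > (0 : ℝ), ∀ t ≥ (0 : ℝ),
      |y t - ∑ j, φ t j * θ j| ≤ C * Real.exp (-lam * t) := by
  have hM : 1 ≤ 2 * N := by omega
  have h0N : (0:ℕ) < 2 * N := by omega
  -- ℕ-indexed data
  set a' : ℕ → ℝ := fun k => if h : k < 2*N then a ⟨k,h⟩ else 0 with ha'
  set ξ' : ℝ → ℕ → ℝ := fun t k => if h : k < 2*N then ξ t ⟨k,h⟩ else 0 with hξ'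
  set U' : ℕ → ℝ → ℝ := Usvf A ph ω with hU'
  have ha'k : ∀ (k : ℕ) (h : k < 2*N), a' k = a ⟨k,h⟩ := fun k h => dif_pos h
  have hξ'k : ∀ (t : ℝ) (k : ℕ) (h : k < 2*N), ξ' t k = ξ t ⟨k,h⟩ := fun t k h => dif_pos h
  have hU0 : ∀ t, U' 0 t = u t := by
    intro t
    rw [hu]
    simp only [hU']
    unfold Usvf
    apply Finset.sum_congr rfl
    intro i _
    norm_num
  have hsum : ∀ t, ∑ j ∈ Finset.range (2*N), a' j * ξ' t j
      = ∑ k : Fin (2*N), a k * ξ t k := by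
    intro t
    rw [← Fin.sum_univ_eq_sum_range (fun j => a' j * ξ' t j) (2*N)]
    apply Finset.sum_congr rfl
    intro k _
    rw [ha'k _ k.isLt, hξ'k _ _ k.isLt]
  have hξd' : ∀ k, k+1 < 2*N → ∀ t ≥ (0:ℝ),
      HasDerivAt (fun s => ξ' s k) (ξ' t (k+1)) t := by
    intro k hk t ht
    have hkM : k < 2*N := by omega
    have e1 : (fun s => ξ' s k) = fun s => ξ s ⟨k, hkM⟩ := by
      funext s; exact dif_pos hkM
    rw [e1, hξ'k t (k+1) hk]
    exact hξ ⟨k, hkM⟩ hk t ht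
  have hlast' : ∀ t ≥ (0:ℝ), HasDerivAt (fun s => ξ' s (2*N-1))
      (-(∑ j ∈ Finset.range (2*N), a' j * ξ' t j) + a' 0 * U' 0 t) t := by
    intro t ht
    have e1 : (fun s => ξ' s (2*N-1)) = fun s => ξ s ⟨2*N-1, by omega⟩ := by
      funext s; exact dif_pos (by omega)
    rw [e1, hsum t, ha'k 0 h0N, hU0 t]
    exact hξlast t ht
  have hXi := Xi_deriv (M := 2*N) (a := a') (U := U') (ξ := ξ') hM hξd' hlast'
    (fun n t => Usvf_deriv A ph ω n t)
  set Wr : ℕ → ℝ → ℝ := fun n t =>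
    (∑ j : Fin N, θ j * Xi (2*N) a' U' ξ' (2*(N-1-(j:ℕ)) + n) t 0)
      + Xi (2*N) a' U' ξ' (2*N + n) t 0 with hWr
  have hWrd : ∀ n, ∀ t ≥ (0:ℝ), HasDerivAt (fun s => Wr n s) (Wr (n+1) t) t := by
    intro n t ht
    have h1 : ∀ m, HasDerivAt (fun s => Xi (2*N) a' U' ξ' m s 0)
        (Xi (2*N) a' U' ξ' (m+1) t 0) t := fun m => hXi m 0 h0N t ht
    simp only [hWr]
    refine HasDerivAt.add (HasDerivAt.fun_sum ?_) (h1 (2*N+n))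
    intro j _
    exact (h1 (2*(N-1-(j:ℕ)) + n)).const_mul (θ j)
  -- C1 : the remainder at level 0
  have hC1 : ∀ t, Wr 0 t = (∑ j, φ t j * θ j) - y t := by
    intro t
    simp only [hWr]
    have h2 : ∀ j : Fin N, Xi (2*N) a' U' ξ' (2*(N-1-(j:ℕ)) + 0) t 0 = φ t j := by
      intro j
      have hj : 2*(N-1-(j:ℕ)) < 2*N := by omega
      rw [Xi_L1 _ 0 (by omega)]
      have e2 : 0 + (2*(N-1-(j:ℕ)) + 0) = 2*(N-1-(j:ℕ)) := by omega
      rw [e2, hξ'k t _ hj, hφ t j]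
    have h3 : Xi (2*N) a' U' ξ' (2*N + 0) t 0
        = -(∑ k : Fin (2*N), a k * ξ t k) + a ⟨0, h0N⟩ * u t := by
      have e3 : 2*N + 0 = 2*N + 0 := rfl
      rw [Xi_G hM 0 t]
      have h4 : ∑ j ∈ Finset.range (2*N), a' j * Xi (2*N) a' U' ξ' (0 + j) t 0
          = ∑ j ∈ Finset.range (2*N), a' j * ξ' t j := by
        apply Finset.sum_congr rfl
        intro j hj
        have hjM : j < 2*N := Finset.mem_range.1 hj
        rw [Xi_L1 (0+j) 0 (by omega)]
        have e4 : 0 + (0 + j) = j := by omega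
        rw [e4]
      rw [h4, hsum t, ha'k 0 h0N, hU0 t]
    have hs2 : (∑ j : Fin N, θ j * Xi (2*N) a' U' ξ' (2*(N-1-(j:ℕ)) + 0) t 0)
        = ∑ j : Fin N, φ t j * θ j := by
      apply Finset.sum_congr rfl
      intro j _
      rw [h2 j]
      ring
    rw [hs2, h3, hy t]
    ring
  -- PU0 : the filter polynomial annihilates u
  have hPU0 : ∀ t, (∑ j : Fin N, θ j * U' (2*(N-1-(j:ℕ))) t) + U' (2*N) t = 0 := by
    intro t
    have key : ∀ i : Fin N,
        (∑ j : Fin N, θ j * ((-1:ℝ)^(N-1-(j:ℕ)) * ω i ^ (2*(N-1-(j:ℕ)))))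
          + (-1:ℝ)^N * ω i ^(2*N) = 0 := by
      intro i
      have h := congrArg (Polynomial.aeval (Complex.I * (ω i : ℂ))) hθ
      simp only [map_add, map_prod, map_pow, map_sum, Polynomial.aeval_X,
        Polynomial.aeval_C, map_mul, Complex.coe_algebraMap] at h
      have hpow : ∀ m:ℕ, (Complex.I * (ω i:ℂ))^(2*m) = (-1)^m * (ω i:ℂ)^(2*m) := by
        intro m
        rw [mul_pow, pow_mul, Complex.I_sq]
      have hL : (∏ i' : Fin N, ((Complex.I*(ω i:ℂ))^2 + ((ω i' : ℝ) : ℂ)^2)) = 0 := by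
        apply Finset.prod_eq_zero (Finset.mem_univ i)
        rw [mul_pow, Complex.I_sq]
        ring
      rw [hL] at h
      simp only [hpow] at h
      apply Complex.ofReal_injective
      push_cast
      linear_combination -h
    have hU2 : ∀ m, U' (2*m) t
        = ∑ i, A i * ((-1:ℝ)^m * ω i^(2*m)) * Real.sin (ω i * t + ph i) :=
      fun m => Usvf_even A ph ω m t
    simp only [hU2]
    have step1 : ∑ j : Fin N,
        θ j * ∑ i, A i * ((-1:ℝ)^(N-1-(j:ℕ)) * ω i^(2*(N-1-(j:ℕ)))) * Real.sin (ω i * t + ph i)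
        = ∑ i, ∑ j : Fin N,
          θ j * (A i * ((-1:ℝ)^(N-1-(j:ℕ)) * ω i^(2*(N-1-(j:ℕ)))) * Real.sin (ω i*t+ph i)) := by
      simp only [Finset.mul_sum]
      exact Finset.sum_comm
    rw [step1, ← Finset.sum_add_distrib]
    apply Finset.sum_eq_zero
    intro i _
    have h4 : ∑ j : Fin N,
        θ j * (A i * ((-1:ℝ)^(N-1-(j:ℕ)) * ω i^(2*(N-1-(j:ℕ)))) * Real.sin (ω i*t+ph i))
        = (A i * Real.sin (ω i*t+ph i))
          * ∑ j : Fin N, θ j * ((-1:ℝ)^(N-1-(j:ℕ)) * ω i^(2*(N-1-(j:ℕ)))) := by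
      rw [Finset.mul_sum]
      exact Finset.sum_congr rfl (fun j _ => by ring)
    rw [h4]
    linear_combination (A i * Real.sin (ω i*t+ph i)) * key i
  -- C2 : the homogeneous ODE for Wr
  have hC2 : ∀ t, (∑ k ∈ Finset.range (2*N), a' k * Wr k t) + Wr (2*N) t = 0 := by
    intro t
    have hG : ∀ m, (∑ k ∈ Finset.range (2*N), a' k * Xi (2*N) a' U' ξ' (m + k) t 0)
        + Xi (2*N) a' U' ξ' (2*N + m) t 0 = a' 0 * U' m t := by
      intro m
      rw [Xi_G hM m t]
      ring
    simp only [hWr]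
    have stepA : ∑ k ∈ Finset.range (2*N), a' k *
        ((∑ j : Fin N, θ j * Xi (2*N) a' U' ξ' (2*(N-1-(j:ℕ))+k) t 0)
          + Xi (2*N) a' U' ξ' (2*N+k) t 0)
        = (∑ j : Fin N, θ j * ∑ k ∈ Finset.range (2*N),
            a' k * Xi (2*N) a' U' ξ' (2*(N-1-(j:ℕ))+k) t 0)
          + ∑ k ∈ Finset.range (2*N), a' k * Xi (2*N) a' U' ξ' (2*N+k) t 0 := by
      calc ∑ k ∈ Finset.range (2*N), a' k *
          ((∑ j : Fin N, θ j * Xi (2*N) a' U' ξ' (2*(N-1-(j:ℕ))+k) t 0)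
            + Xi (2*N) a' U' ξ' (2*N+k) t 0)
          = ∑ k ∈ Finset.range (2*N),
            ((∑ j : Fin N, θ j * (a' k * Xi (2*N) a' U' ξ' (2*(N-1-(j:ℕ))+k) t 0))
              + a' k * Xi (2*N) a' U' ξ' (2*N+k) t 0) := by
            apply Finset.sum_congr rfl
            intro k _
            rw [mul_add, Finset.mul_sum]
            congr 1
            exact Finset.sum_congr rfl (fun j _ => by ring)
        _ = (∑ k ∈ Finset.range (2*N), ∑ j : Fin N,
              θ j * (a' k * Xi (2*N) a' U' ξ' (2*(N-1-(j:ℕ))+k) t 0))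
            + ∑ k ∈ Finset.range (2*N), a' k * Xi (2*N) a' U' ξ' (2*N+k) t 0 :=
            Finset.sum_add_distrib
        _ = (∑ j : Fin N, ∑ k ∈ Finset.range (2*N),
              θ j * (a' k * Xi (2*N) a' U' ξ' (2*(N-1-(j:ℕ))+k) t 0))
            + ∑ k ∈ Finset.range (2*N), a' k * Xi (2*N) a' U' ξ' (2*N+k) t 0 := by
            rw [Finset.sum_comm]
        _ = (∑ j : Fin N, θ j * ∑ k ∈ Finset.range (2*N),
              a' k * Xi (2*N) a' U' ξ' (2*(N-1-(j:ℕ))+k) t 0)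
            + ∑ k ∈ Finset.range (2*N), a' k * Xi (2*N) a' U' ξ' (2*N+k) t 0 := by
            congr 1
            exact Finset.sum_congr rfl (fun j _ => by rw [Finset.mul_sum])
    rw [stepA]
    have comm1 : ∀ j : Fin N, Xi (2*N) a' U' ξ' (2*(N-1-(j:ℕ)) + 2*N) t 0
        = Xi (2*N) a' U' ξ' (2*N + 2*(N-1-(j:ℕ))) t 0 := by
      intro j; rw [Nat.add_comm]
    calc (∑ j : Fin N, θ j * ∑ k ∈ Finset.range (2*N),
            a' k * Xi (2*N) a' U' ξ' (2*(N-1-(j:ℕ))+k) t 0)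
          + (∑ k ∈ Finset.range (2*N), a' k * Xi (2*N) a' U' ξ' (2*N+k) t 0)
          + ((∑ j : Fin N, θ j * Xi (2*N) a' U' ξ' (2*(N-1-(j:ℕ))+2*N) t 0)
            + Xi (2*N) a' U' ξ' (2*N+2*N) t 0)
        = (∑ j : Fin N, θ j * ((∑ k ∈ Finset.range (2*N),
              a' k * Xi (2*N) a' U' ξ' (2*(N-1-(j:ℕ))+k) t 0)
            + Xi (2*N) a' U' ξ' (2*N + 2*(N-1-(j:ℕ))) t 0))
          + ((∑ k ∈ Finset.range (2*N), a' k * Xi (2*N) a' U' ξ' (2*N+k) t 0)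
            + Xi (2*N) a' U' ξ' (2*N+2*N) t 0) := by
          simp only [comm1, mul_add]
          rw [Finset.sum_add_distrib]
          ring
      _ = (∑ j : Fin N, θ j * (a' 0 * U' (2*(N-1-(j:ℕ))) t)) + a' 0 * U' (2*N) t := by
          rw [hG (2*N)]
          congr 1
          exact Finset.sum_congr rfl (fun j _ => by rw [hG (2*(N-1-(j:ℕ)))])
      _ = a' 0 * ((∑ j : Fin N, θ j * U' (2*(N-1-(j:ℕ))) t) + U' (2*N) t) := by
          rw [mul_add, Finset.mul_sum]
          congr 1
          exact Finset.sum_congr rfl (fun j _ => by ring)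
      _ = 0 := by rw [hPU0 t, mul_zero]
  -- complexify
  set Wc : ℕ → ℝ → ℂ := fun n t => ((Wr n t : ℝ) : ℂ) with hWc
  have hWcd : ∀ k, ∀ t ≥ (0:ℝ), HasDerivAt (fun s => Wc k s) (Wc (k+1) t) t :=
    fun k t ht => (hWrd k t ht).ofReal_comp
  -- the Hurwitz polynomial over ℂ
  set p : Polynomial ℂ := Polynomial.X^(2*N)
      + ∑ k ∈ Finset.range (2*N), Polynomial.C ((a' k : ℝ) : ℂ) * Polynomial.X^k with hp
  have hqdeg : (∑ k ∈ Finset.range (2*N),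
      Polynomial.C ((a' k:ℝ):ℂ) * Polynomial.X^k).degree < ((2*N : ℕ) : WithBot ℕ) := by
    apply lt_of_le_of_lt (Polynomial.degree_sum_le _ _)
    rw [Finset.sup_lt_iff (by exact_mod_cast WithBot.bot_lt_coe (2*N))]
    intro k hk
    exact lt_of_le_of_lt (Polynomial.degree_C_mul_X_pow_le k _)
      (by exact_mod_cast Finset.mem_range.1 hk)
  have hmonic : p.Monic := Polynomial.monic_X_pow_add hqdeg
  have hpdeg : p.degree = (2*N : ℕ) := by
    rw [hp, Polynomial.degree_add_eq_left_of_degree_lt, Polynomial.degree_X_pow]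
    rw [Polynomial.degree_X_pow]
    exact hqdeg
  have hpnat : p.natDegree = 2*N := Polynomial.natDegree_eq_of_degree_eq_some hpdeg
  have hsplits : Polynomial.Splits p := IsAlgClosed.splits p
  set L : List ℂ := p.roots.toList with hLdef
  have hcard : L.length = 2*N := by
    rw [hLdef, Multiset.length_toList, Polynomial.splits_iff_card_roots.1 hsplits, hpnat]
  have hprod : (L.map (fun l => Polynomial.X - Polynomial.C l)).prod = p := by
    have h1 := hsplits.eq_prod_roots_of_monic hmonic
    rw [h1, ← Multiset.coe_toList p.roots, Multiset.map_coe, Multiset.prod_coe]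
  have hpeval : ∀ z : ℂ, Polynomial.eval z p
      = z^(2*N) + ∑ k : Fin (2*N), (a k:ℂ) * z^(k:ℕ) := by
    intro z
    rw [hp]
    simp only [Polynomial.eval_add, Polynomial.eval_pow, Polynomial.eval_X,
      Polynomial.eval_finset_sum, Polynomial.eval_mul, Polynomial.eval_C]
    congr 1
    rw [← Fin.sum_univ_eq_sum_range (fun k => ((a' k:ℝ):ℂ) * z^k) (2*N)]
    apply Finset.sum_congr rfl
    intro k _
    rw [ha'k _ k.isLt]
  have hroots : ∀ l ∈ L, l.re < 0 := by
    intro l hl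
    have hmem : l ∈ p.roots := by rw [← Multiset.mem_toList]; exact hl
    have hev := (Polynomial.mem_roots hmonic.ne_zero).1 hmem
    apply hHurwitz l
    rw [← hpeval l]
    exact hev
  have hcoeff : ∀ k, k < 2*N → p.coeff k = ((a' k : ℝ):ℂ) := by
    intro k hk
    rw [hp, Polynomial.coeff_add, Polynomial.coeff_X_pow, if_neg (by omega),
      Polynomial.finset_sum_coeff]
    simp only [Polynomial.coeff_C_mul, Polynomial.coeff_X_pow, mul_ite, mul_one, mul_zero]
    rw [Finset.sum_ite_eq (Finset.range (2*N)) k (fun j => ((a' j:ℝ):ℂ))]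
    rw [if_pos (Finset.mem_range.2 hk), zero_add]
  have hcoeffM : p.coeff (2*N) = 1 := by
    rw [hp, Polynomial.coeff_add, Polynomial.coeff_X_pow, if_pos rfl,
      Polynomial.finset_sum_coeff]
    simp only [Polynomial.coeff_C_mul, Polynomial.coeff_X_pow, mul_ite, mul_one, mul_zero]
    rw [Finset.sum_ite_eq (Finset.range (2*N)) (2*N) (fun j => ((a' j:ℝ):ℂ))]
    rw [if_neg (by simp), add_zero]
  have hop0 : ∀ t ≥ (0:ℝ), opApply L Wc t = 0 := by
    intro t ht
    rw [opApply_coeff, hprod, hcard, Finset.sum_range_succ]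
    have h5 : ∑ k ∈ Finset.range (2*N), p.coeff k * Wc k t
        = ∑ k ∈ Finset.range (2*N), ((a' k : ℝ):ℂ) * Wc k t :=
      Finset.sum_congr rfl (fun k hk => by rw [hcoeff k (Finset.mem_range.1 hk)])
    rw [h5, hcoeffM, one_mul]
    have h6 := hC2 t
    have h7 : (∑ k ∈ Finset.range (2*N), ((a' k : ℝ):ℂ) * Wc k t) + Wc (2*N) t
        = (((∑ k ∈ Finset.range (2*N), a' k * Wr k t) + Wr (2*N) t : ℝ) : ℂ) := by
      simp only [hWc]
      push_cast
      ring
    rw [h7, h6]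
    exact Complex.ofReal_zero
  obtain ⟨C, hC, μ, hμ, hdec⟩ := opDecay L hroots Wc hWcd hop0
  refine ⟨C, hC, μ, hμ, fun t ht => ?_⟩
  have h6 := hdec t ht
  have h8 : ‖Wc 0 t‖ = |Wr 0 t| := by
    simp only [hWc]
    rw [Complex.norm_real, Real.norm_eq_abs]
  rw [h8] at h6
  have h9 : y t - ∑ j, φ t j * θ j = -(Wr 0 t) := by
    rw [hC1 t]; ring
  rw [h9, abs_neg]
  exact h6
end

section
/- (Persistency of excitation of the steady-state regressor.) Let N ≥ 1, let ω_1,…,ω_N > 0 be pairwise distinct, let B_1,…,B_N > 0 and φ̄_1,…,φ̄_N ∈ ℝ. Define v : ℝ → ℝ^N by v_k(t) = Σ_{i=1}^N (−ω_i²)^{N−k} B_i sin(ω_i t + φ̄_i) for k = 1,…,N. Then v is persistently exciting: there exist T > 0 and δ > 0 such that for every t ≥ 0 and every c ∈ ℝ^N with ‖c‖ = 1, ∫_t^{t+T} (c · v(s))² ds ≥ δ. -/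
open Real intervalIntegral

set_option maxHeartbeats 1000000



lemma cos_lin_int_bound {α : ℝ} (hα : α ≠ 0) (β t T : ℝ) :
    |∫ s in t..t+T, Real.cos (α * s + β)| ≤ 2 / |α| := by
  rw [intervalIntegral.integral_comp_mul_add Real.cos hα β, integral_cos, smul_eq_mul,
    abs_mul, abs_inv]
  rw [div_eq_mul_inv, mul_comm]
  have h2 : |Real.sin (α * (t + T) + β) - Real.sin (α * t + β)| ≤ 2 := by
    calc |Real.sin (α * (t + T) + β) - Real.sin (α * t + β)|
        ≤ |Real.sin (α * (t + T) + β)| + |Real.sin (α * t + β)| := abs_sub _ _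
      _ ≤ 1 + 1 := add_le_add (Real.abs_sin_le_one _) (Real.abs_sin_le_one _)
      _ = 2 := by norm_num
  exact mul_le_mul_of_nonneg_right h2 (inv_nonneg.2 (abs_nonneg _))

lemma sin_mul_sin' (a b : ℝ) :
    Real.sin a * Real.sin b = (Real.cos (a - b) - Real.cos (a + b)) / 2 := by
  have h := Real.cos_sub_cos (a - b) (a + b)
  rw [show (a - b + (a + b)) / 2 = a by ring, show (a - b - (a + b)) / 2 = -b by ring,
    Real.sin_neg] at h
  linarith

lemma sin_sin_integral (ω₁ ω₂ φ₁ φ₂ t T : ℝ) :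
    (∫ s in t..t+T, Real.sin (ω₁*s+φ₁) * Real.sin (ω₂*s+φ₂))
    = ((∫ s in t..t+T, Real.cos ((ω₁-ω₂)*s+(φ₁-φ₂)))
      - ∫ s in t..t+T, Real.cos ((ω₁+ω₂)*s+(φ₁+φ₂))) / 2 := by
  have hpt : ∀ s : ℝ, Real.sin (ω₁*s+φ₁) * Real.sin (ω₂*s+φ₂)
      = (Real.cos ((ω₁-ω₂)*s+(φ₁-φ₂)) - Real.cos ((ω₁+ω₂)*s+(φ₁+φ₂))) / 2 := by
    intro s
    rw [sin_mul_sin', show (ω₁*s+φ₁) - (ω₂*s+φ₂) = (ω₁-ω₂)*s+(φ₁-φ₂) by ring,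
      show (ω₁*s+φ₁) + (ω₂*s+φ₂) = (ω₁+ω₂)*s+(φ₁+φ₂) by ring]
  rw [intervalIntegral.integral_congr (g := fun s =>
      (Real.cos ((ω₁-ω₂)*s+(φ₁-φ₂)) - Real.cos ((ω₁+ω₂)*s+(φ₁+φ₂))) / 2)
      (fun s _ => hpt s)]
  rw [intervalIntegral.integral_div, intervalIntegral.integral_sub
    (Continuous.intervalIntegrable (by continuity) _ _)
    (Continuous.intervalIntegrable (by continuity) _ _)]

lemma sin_sin_diag {ω : ℝ} (hω : 0 < ω) (φ t T : ℝ) :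
    |(∫ s in t..t+T, Real.sin (ω*s+φ) * Real.sin (ω*s+φ)) - T/2| ≤ 1/(2*ω) := by
  rw [sin_sin_integral]
  have h1 : (∫ s in t..t+T, Real.cos ((ω-ω)*s+(φ-φ))) = T := by
    simp
  have h2 : |∫ s in t..t+T, Real.cos ((ω+ω)*s+(φ+φ))| ≤ 1/ω := by
    have := cos_lin_int_bound (α := ω+ω) (by positivity) (φ+φ) t T
    rwa [show |ω+ω| = ω+ω from abs_of_pos (by positivity),
      show (2:ℝ)/(ω+ω) = 1/ω by field_simp; ring] at this
  rw [h1]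
  rw [show (T - ∫ s in t..t+T, Real.cos ((ω+ω)*s+(φ+φ))) / 2 - T/2
    = -(∫ s in t..t+T, Real.cos ((ω+ω)*s+(φ+φ))) / 2 by ring]
  rw [abs_div, abs_neg, abs_of_pos (by norm_num : (0:ℝ) < 2)]
  calc |∫ s in t..t+T, Real.cos ((ω+ω)*s+(φ+φ))| / 2 ≤ (1/ω)/2 := by linarith
    _ = 1/(2*ω) := by ring

lemma sin_sin_offdiag {ω₁ ω₂ : ℝ} (hω₁ : 0 < ω₁) (hω₂ : 0 < ω₂) (hne : ω₁ ≠ ω₂)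
    (φ₁ φ₂ t T : ℝ) :
    |∫ s in t..t+T, Real.sin (ω₁*s+φ₁) * Real.sin (ω₂*s+φ₂)|
      ≤ 1/|ω₁-ω₂| + 1/(ω₁+ω₂) := by
  rw [sin_sin_integral]
  have h1 := cos_lin_int_bound (α := ω₁-ω₂) (sub_ne_zero.2 hne) (φ₁-φ₂) t T
  have h2 := cos_lin_int_bound (α := ω₁+ω₂) (by positivity) (φ₁+φ₂) t T
  rw [show |ω₁+ω₂| = ω₁+ω₂ from abs_of_pos (by positivity)] at h2
  rw [abs_div, abs_of_pos (by norm_num : (0:ℝ) < 2)]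
  have h3 : |(∫ s in t..t+T, Real.cos ((ω₁-ω₂)*s+(φ₁-φ₂)))
      - ∫ s in t..t+T, Real.cos ((ω₁+ω₂)*s+(φ₁+φ₂))| ≤ 2/|ω₁-ω₂| + 2/(ω₁+ω₂) :=
    (abs_sub _ _).trans (add_le_add h1 h2)
  have h4 : (0:ℝ) < |ω₁-ω₂| := abs_pos.2 (sub_ne_zero.2 hne)
  rw [div_le_iff₀ (by norm_num : (0:ℝ) < 2)]
  calc |(∫ s in t..t+T, Real.cos ((ω₁-ω₂)*s+(φ₁-φ₂)))
      - ∫ s in t..t+T, Real.cos ((ω₁+ω₂)*s+(φ₁+φ₂))| ≤ 2/|ω₁-ω₂| + 2/(ω₁+ω₂) := h3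
    _ = (1/|ω₁-ω₂| + 1/(ω₁+ω₂)) * 2 := by ring

lemma qform_pos (N : ℕ) (hN : 1 ≤ N) (ω B : Fin N → ℝ)
    (hω : ∀ i, ω i > 0) (hdist : Function.Injective ω) (hB : ∀ i, B i > 0) :
    ∃ m > (0:ℝ), ∀ c : EuclideanSpace ℝ (Fin N), ‖c‖ = 1 →
      m ≤ ∑ i, (B i * ∑ k, c k * (-(ω i)^2) ^ (N - 1 - (k:ℕ)))^2 := by
  set x : Fin N → ℝ := fun i => -(ω i)^2 with hxdef
  have hxinj : Function.Injective x := by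
    intro i j h
    apply hdist
    have h2 : (ω i)^2 = (ω j)^2 := by
      have := hω i; have := hω j
      simpa [hxdef, neg_inj] using h
    nlinarith [hω i, hω j]
  set q : EuclideanSpace ℝ (Fin N) → ℝ :=
    fun c => ∑ i, (B i * ∑ k, c k * x i ^ (N - 1 - (k:ℕ)))^2 with hqdef
  have hqcont : Continuous q := by
    apply continuous_finset_sum
    intro i _
    apply Continuous.pow
    apply Continuous.mul continuous_const
    apply continuous_finset_sum
    intro k _
    exact ((EuclideanSpace.proj k).continuous).mul continuous_const
  have hsph : IsCompact (Metric.sphere (0 : EuclideanSpace ℝ (Fin N)) 1) :=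
    isCompact_sphere _ _
  have hne : (Metric.sphere (0 : EuclideanSpace ℝ (Fin N)) 1).Nonempty := by
    refine ⟨EuclideanSpace.single ⟨0, hN⟩ 1, ?_⟩
    simp [EuclideanSpace.norm_single]
  obtain ⟨c₀, hc₀mem, hmin⟩ := hsph.exists_isMinOn hne hqcont.continuousOn
  have hc₀norm : ‖c₀‖ = 1 := by simpa using mem_sphere_zero_iff_norm.1 hc₀mem
  refine ⟨q c₀, ?_, fun c hc => hmin (mem_sphere_zero_iff_norm.2 hc)⟩
  -- q c₀ > 0
  have hq0 : 0 ≤ q c₀ := Finset.sum_nonneg fun i _ => sq_nonneg _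
  rcases hq0.lt_or_eq with h | h
  · exact h
  exfalso
  have hz : ∀ i, B i * ∑ k, c₀ k * x i ^ (N - 1 - (k:ℕ)) = 0 := by
    intro i
    have := (Finset.sum_eq_zero_iff_of_nonneg (fun i _ => sq_nonneg
      (B i * ∑ k, c₀ k * x i ^ (N - 1 - (k:ℕ))))).1 h.symm i (Finset.mem_univ i)
    exact pow_eq_zero_iff (by norm_num) |>.1 this
  have hz' : ∀ i, ∑ k, c₀ k * x i ^ (N - 1 - (k:ℕ)) = 0 := fun i =>
    (mul_eq_zero.1 (hz i)).resolve_left (ne_of_gt (hB i))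
  -- vandermonde
  have hc0 : ∀ k, c₀ (Fin.rev k) = 0 := by
    have := Matrix.eq_zero_of_forall_index_sum_mul_pow_eq_zero (f := x)
      (v := fun i => c₀ (Fin.rev i)) hxinj ?_
    · intro k; exact congrFun this k
    · intro j
      rw [← hz' j]
      apply Finset.sum_bijective Fin.rev (Fin.rev_bijective) (by simp)
      intro k _
      have hk := k.isLt
      congr 2
      rw [Fin.val_rev]
      omega
  have : c₀ = 0 := by
    ext k
    have := hc0 (Fin.rev k)
    rwa [Fin.rev_rev] at this
  rw [this] at hc₀norm
  simp at hc₀norm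

/-- persistency of excitation of the steady-state regressor
`v_k(t) = Σ_i (-ω_i²)^{N-k} B_i sin(ω_i t + φ̄_i)`. -/
theorem statement3 (N : ℕ) (hN : 1 ≤ N) (ω B phbar : Fin N → ℝ)
    (hω : ∀ i, ω i > 0) (hdist : Function.Injective ω) (hB : ∀ i, B i > 0)
    (v : ℝ → Fin N → ℝ)
    (hv : ∀ t (k : Fin N),
      v t k = ∑ i, (-(ω i) ^ 2) ^ (N - 1 - (k : ℕ)) * B i * Real.sin (ω i * t + phbar i)) :
    ∃ T > (0 : ℝ), ∃ δ > (0 : ℝ), ∀ t ≥ (0 : ℝ),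
      ∀ c : EuclideanSpace ℝ (Fin N), ‖c‖ = 1 →
        δ ≤ ∫ s in t..(t + T), (∑ k, c k * v s k) ^ 2 := by
  obtain ⟨m, hm, hmle⟩ := qform_pos N hN ω B hω hdist hB
  set b : Fin N → Fin N → ℝ := fun i j =>
    if i = j then 1/(2*ω i) else 1/|ω i - ω j| + 1/(ω i + ω j) with hbdef
  have hbnn : ∀ i j, 0 ≤ b i j := by
    intro i j
    by_cases h : i = j <;> simp only [hbdef, h, if_true, if_false, reduceIte]
    · exact one_div_nonneg.2 (by linarith [hω j])
    · exact add_nonneg (one_div_nonneg.2 (abs_nonneg _))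
        (one_div_nonneg.2 (by linarith [hω i, hω j]))
  set K : ℝ := ∑ i, ∑ j, b i j with hKdef
  have hKnn : 0 ≤ K :=
    Finset.sum_nonneg fun i _ => Finset.sum_nonneg fun j _ => hbnn i j
  have hbK : ∀ i j, b i j ≤ K := by
    intro i j
    calc b i j ≤ ∑ j', b i j' :=
          Finset.single_le_sum (fun j' _ => hbnn i j') (Finset.mem_univ j)
      _ ≤ K := Finset.single_le_sum (f := fun i' => ∑ j', b i' j')
          (fun i' _ => Finset.sum_nonneg fun j' _ => hbnn i' j') (Finset.mem_univ i)
  refine ⟨2*(K*N + 1), by positivity, m, hm, fun t ht c hc => ?_⟩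
  set T : ℝ := 2*(K*N + 1) with hTdef
  set a : Fin N → ℝ := fun i => B i * ∑ k, c k * (-(ω i)^2) ^ (N - 1 - (k:ℕ)) with hadef
  set S : ℝ := ∑ i, a i ^ 2 with hSdef
  have hmS : m ≤ S := hmle c hc
  -- pointwise rewrite
  have hpt : ∀ s, (∑ k, c k * v s k)
      = ∑ i, a i * Real.sin (ω i * s + phbar i) := by
    intro s
    simp only [hv, Finset.mul_sum]
    rw [Finset.sum_comm]
    refine Finset.sum_congr rfl fun i _ => ?_
    simp only [hadef, Finset.sum_mul, Finset.mul_sum]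
    refine Finset.sum_congr rfl fun k _ => by ring
  set I : Fin N → Fin N → ℝ := fun i j =>
    ∫ s in t..t+T, Real.sin (ω i*s+phbar i) * Real.sin (ω j*s+phbar j) with hIdef
  have hIeq : (∫ s in t..(t+T), (∑ k, c k * v s k)^2)
      = ∑ i, ∑ j, a i * a j * I i j := by
    have hpt2 : ∀ s, (∑ k, c k * v s k)^2
        = ∑ i, ∑ j, (a i * a j) *
          (Real.sin (ω i*s+phbar i) * Real.sin (ω j*s+phbar j)) := by
      intro s
      rw [hpt s, sq, Finset.sum_mul_sum]
      exact Finset.sum_congr rfl fun i _ => Finset.sum_congr rfl fun j _ => by ring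
    rw [intervalIntegral.integral_congr (g := fun s => ∑ i, ∑ j, (a i * a j) *
          (Real.sin (ω i*s+phbar i) * Real.sin (ω j*s+phbar j)))
        (fun s _ => hpt2 s)]
    rw [intervalIntegral.integral_finset_sum (fun i _ =>
      Continuous.intervalIntegrable (by fun_prop) _ _)]
    refine Finset.sum_congr rfl fun i _ => ?_
    rw [intervalIntegral.integral_finset_sum (fun j _ =>
      Continuous.intervalIntegrable (by fun_prop) _ _)]
    refine Finset.sum_congr rfl fun j _ => ?_
    rw [intervalIntegral.integral_const_mul]
  -- error bound
  have hIJ : ∀ i j, |I i j - (if i = j then T/2 else 0)| ≤ K := by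
    intro i j
    by_cases h : i = j
    · subst h
      simp only [if_true, reduceIte]
      refine (sin_sin_diag (hω i) (phbar i) t T).trans ?_
      calc 1/(2*ω i) = b i i := by simp [hbdef]
        _ ≤ K := hbK i i
    · simp only [h, if_false, reduceIte, sub_zero]
      refine (sin_sin_offdiag (hω i) (hω j) (fun he => h (hdist he)) _ _ t T).trans ?_
      calc 1/|ω i - ω j| + 1/(ω i + ω j) = b i j := by simp [hbdef, h]
        _ ≤ K := hbK i j
  -- lower bound the sum
  have hterm : ∀ i j, a i * a j * (if i = j then T/2 else 0) - |a i| * |a j| * K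
      ≤ a i * a j * I i j := by
    intro i j
    have h1 : |a i * a j * (I i j - (if i = j then T/2 else 0))|
        ≤ |a i| * |a j| * K := by
      rw [abs_mul, abs_mul]
      exact mul_le_mul_of_nonneg_left (hIJ i j) (by positivity)
    have h2 := neg_abs_le (a i * a j * (I i j - (if i = j then T/2 else 0)))
    nlinarith [h1, h2]
  have hsum : ∑ i, ∑ j, (a i * a j * (if i = j then T/2 else 0) - |a i| * |a j| * K)
      ≤ ∑ i, ∑ j, a i * a j * I i j :=
    Finset.sum_le_sum fun i _ => Finset.sum_le_sum fun j _ => hterm i j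
  have hdiag : ∑ i, ∑ j, (a i * a j * (if i = j then T/2 else 0) - |a i| * |a j| * K)
      = (T/2) * S - K * (∑ i, |a i|)^2 := by
    have h1 : ∑ i, ∑ j, (a i * a j * if i = j then T/2 else 0) = T/2 * S := by
      simp only [mul_ite, mul_zero, Finset.sum_ite_eq, Finset.mem_univ, if_true]
      rw [hSdef, Finset.mul_sum]
      exact Finset.sum_congr rfl fun i _ => by ring
    have h2 : ∑ i, ∑ j, |a i| * |a j| * K = K * (∑ i, |a i|)^2 := by
      rw [sq, Finset.sum_mul_sum, Finset.mul_sum]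
      refine Finset.sum_congr rfl fun i _ => ?_
      rw [Finset.mul_sum]
      exact Finset.sum_congr rfl fun j _ => by ring
    simp only [Finset.sum_sub_distrib]
    rw [h1, h2]
  have hCS : (∑ i, |a i|)^2 ≤ (N:ℝ) * S := by
    have h := sq_sum_le_card_mul_sum_sq (s := (Finset.univ : Finset (Fin N)))
      (f := fun i => |a i|)
    simpa [sq_abs, hSdef] using h
  calc m ≤ S := hmS
    _ = (T/2)*S - K*((N:ℝ)*S) := by rw [hTdef]; ring
    _ ≤ (T/2)*S - K*(∑ i, |a i|)^2 := by
        have := mul_le_mul_of_nonneg_left hCS hKnn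
        linarith
    _ = ∑ i, ∑ j, (a i * a j * (if i = j then T/2 else 0) - |a i| * |a j| * K) :=
        hdiag.symm
    _ ≤ ∑ i, ∑ j, a i * a j * I i j := hsum
    _ = ∫ s in t..(t+T), (∑ k, c k * v s k)^2 := hIeq.symm
end

section
/- Let k > 0, let ψ : ℝ → ℝ be continuous, and let x : ℝ → ℝ be differentiable on [0,∞) with x'(t) = −k ψ(t)² x(t) for all t ≥ 0. Suppose ψ is persistently exciting: there exist T > 0 and δ > 0 such that ∫_t^{t+T} ψ(s)² ds ≥ δ for all t ≥ 0. Then x converges to zero exponentially fast: there exist C ≥ 0 and λ > 0 such that |x(t)| ≤ C e^{−λ t} |x(0)| for all t ≥ 0. -/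
/-- if `ψ` is persistently exciting then the solution of the scalar
DREM error dynamics `x' = -k ψ(t)² x` converges to zero exponentially fast. -/
theorem statement7 (k : ℝ) (hk : k > 0) (ψ : ℝ → ℝ) (hψ : Continuous ψ)
    (x : ℝ → ℝ)
    (hx : ∀ t ≥ (0 : ℝ), HasDerivAt x (-k * (ψ t) ^ 2 * x t) t)
    (T δ : ℝ) (hT : T > 0) (hδ : δ > 0)
    (hPE : ∀ t ≥ (0 : ℝ), δ ≤ ∫ s in t..(t + T), (ψ s) ^ 2) :
    ∃ C ≥ (0 : ℝ), ∃ lam > (0 : ℝ), ∀ t ≥ (0 : ℝ),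
      |x t| ≤ C * Real.exp (-lam * t) * |x 0| := by
  have hg : Continuous fun s => (ψ s) ^ 2 := hψ.pow 2
  set Φ : ℝ → ℝ := fun t => ∫ s in (0:ℝ)..t, (ψ s) ^ 2 with hΦdef
  have hΦ0 : Φ 0 = 0 := intervalIntegral.integral_same
  have hΦderiv : ∀ t : ℝ, HasDerivAt Φ ((ψ t) ^ 2) t := fun t =>
    intervalIntegral.integral_hasDerivAt_right (hg.intervalIntegrable 0 t)
      hg.aestronglyMeasurable.stronglyMeasurableAtFilter hg.continuousAt
  -- f is constant on [0, ∞)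
  set f : ℝ → ℝ := fun t => x t * Real.exp (k * Φ t) with hfdef
  have hfderiv : ∀ t ≥ (0:ℝ), HasDerivAt f 0 t := by
    intro t ht
    have h1 : HasDerivAt f (-k * ψ t ^ 2 * x t * Real.exp (k * Φ t) + x t * (Real.exp (k * Φ t) * (k * ψ t ^ 2))) t := (hx t ht).fun_mul (((hΦderiv t).const_mul k).exp)
    convert h1 using 1
    ring
  have hfconst : ∀ t ≥ (0:ℝ), f t = f 0 := by
    intro t ht
    have := constant_of_has_deriv_right_zero (a := 0) (b := t)
      (f := f) (fun s hs => ((hfderiv s hs.1).continuousAt).continuousWithinAt)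
      (fun s hs => (hfderiv s hs.1).hasDerivWithinAt)
    exact this t ⟨ht, le_refl t⟩
  have hxeq : ∀ t ≥ (0:ℝ), x t = x 0 * Real.exp (-(k * Φ t)) := by
    intro t ht
    have h := hfconst t ht
    simp only [hfdef, hΦ0, mul_zero, Real.exp_zero, mul_one] at h
    have hne : Real.exp (k * Φ t) ≠ 0 := Real.exp_ne_zero _
    field_simp [Real.exp_neg] at h ⊢
    rw [← h, Real.exp_neg, mul_assoc, mul_inv_cancel₀ hne, mul_one]
  -- monotonicity & lower bound on Φ
  have hΦadd : ∀ a b : ℝ, Φ b = Φ a + ∫ s in a..b, (ψ s)^2 := by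
    intro a b
    rw [hΦdef]
    simp only
    rw [← intervalIntegral.integral_add_adjacent_intervals
      (hg.intervalIntegrable 0 a) (hg.intervalIntegrable a b)]
  have hΦmono : ∀ a b : ℝ, a ≤ b → Φ a ≤ Φ b := by
    intro a b hab
    rw [hΦadd a b]
    have : 0 ≤ ∫ s in a..b, (ψ s)^2 :=
      intervalIntegral.integral_nonneg hab (fun s _ => sq_nonneg _)
    linarith
  have hΦnat : ∀ n : ℕ, (n : ℝ) * δ ≤ Φ (n * T) := by
    intro n
    induction n with
    | zero => simp [hΦ0]
    | succ n ih =>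
      have heq : ((n+1 : ℕ) : ℝ) * T = (n : ℝ) * T + T := by push_cast; ring
      have h2 := hPE ((n:ℝ)*T) (by positivity)
      have h1 : Φ (((n+1 : ℕ) : ℝ) * T) = Φ ((n:ℝ) * T) + ∫ s in ((n:ℝ)*T)..((n:ℝ)*T + T), (ψ s)^2 := by
        rw [heq]; exact hΦadd _ _
      push_cast at h1 ⊢
      rw [h1]
      push_cast at ih
      linarith
  have hΦlb : ∀ t ≥ (0:ℝ), δ * (t / T - 1) ≤ Φ t := by
    intro t ht
    set n := ⌊t / T⌋₊ with hn
    have hn1 : (n : ℝ) ≤ t / T := Nat.floor_le (by positivity)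
    have hn2 : t / T < n + 1 := Nat.lt_floor_add_one _
    have h1 : (n:ℝ) * T ≤ t := (le_div_iff₀ hT).1 hn1
    have h2 := hΦmono ((n:ℝ)*T) t h1
    have h3 := hΦnat n
    have : δ * (t / T - 1) ≤ (n:ℝ) * δ := by nlinarith
    linarith
  -- conclude
  refine ⟨Real.exp (k * δ), (Real.exp_pos _).le, k * δ / T, by positivity, ?_⟩
  intro t ht
  rw [hxeq t ht, abs_mul, abs_of_pos (Real.exp_pos _), mul_comm]
  have key : Real.exp (-(k * Φ t)) ≤ Real.exp (k*δ) * Real.exp (-(k*δ/T) * t) := by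
    rw [← Real.exp_add]
    apply Real.exp_le_exp.2
    have := hΦlb t ht
    have hkT : 0 < k * δ / T := by positivity
    have : k * (δ * (t/T - 1)) ≤ k * Φ t := by nlinarith
    have hexp : k * (δ * (t/T - 1)) = -(k*δ) + (k*δ/T) * t := by field_simp; ring
    linarith [hexp ▸ this]
  calc Real.exp (-(k * Φ t)) * |x 0|
      ≤ (Real.exp (k*δ) * Real.exp (-(k*δ/T) * t)) * |x 0| := by
        apply mul_le_mul_of_nonneg_right key (abs_nonneg _)
    _ = Real.exp (k*δ) * Real.exp (-(k*δ/T) * t) * |x 0| := by ring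
end

section
/- (Proposition 2 with delay operators, asymptotic convergence.) Let q ≥ 1, let r ∈ ℝ^q, let m : ℝ → ℝ^q be bounded and continuous, and let ρ : ℝ → ℝ satisfy ρ(t) = m(t)ᵀ r for all t ∈ ℝ. Let d_1,…,d_{q−1} > 0 be pairwise distinct delays. Define the extended regressor matrix M_e(t) ∈ ℝ^{q×q} whose first row is m(t)ᵀ and whose (j+1)-th row is m(t−d_j)ᵀ for j = 1,…,q−1, the vector R_e(t) = (ρ(t), ρ(t−d_1),…,ρ(t−d_{q−1}))ᵀ, the scalar ψ(t) = det M_e(t), and R(t) = adj(M_e(t)) R_e(t), where adj denotes the adjugate matrix. Let k_1,…,k_q > 0 and let r̂ : ℝ → ℝ^q be differentiable on [0,∞) with r̂_i'(t) = k_i ψ(t) (R_i(t) − ψ(t) r̂_i(t)) for all t ≥ 0 and i = 1,…,q. If ∫_0^t ψ(s)² ds → ∞ as t → ∞ (i.e. ψ ∉ L²), then r̂_i(t) → r_i as t → ∞ for every i = 1,…,q. -/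
/-- Proposition 2 with delay operators, asymptotic convergence:
DREM with `q-1` pairwise-distinct delays; if `ψ = det M_e ∉ L²` then every
component of the scalar gradient estimator converges to the true parameter. -/
theorem statement8 (q : ℕ) (hq : 1 ≤ q) (r : Fin q → ℝ)
    (m : ℝ → Fin q → ℝ) (hm_cont : Continuous m)
    (hm_bdd : ∃ c : ℝ, ∀ t i, |m t i| ≤ c)
    (ρ : ℝ → ℝ) (hρ : ∀ t, ρ t = ∑ i, m t i * r i)
    (d : Fin (q - 1) → ℝ) (hd_pos : ∀ j, d j > 0) (hd_dist : Function.Injective d)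
    (Me : ℝ → Matrix (Fin q) (Fin q) ℝ)
    (hMe : ∀ t (i j : Fin q), Me t i j =
      if h : (i : ℕ) = 0 then m t j else m (t - d ⟨(i : ℕ) - 1, by omega⟩) j)
    (Re : ℝ → Fin q → ℝ)
    (hRe : ∀ t (i : Fin q), Re t i =
      if h : (i : ℕ) = 0 then ρ t else ρ (t - d ⟨(i : ℕ) - 1, by omega⟩))
    (ψ : ℝ → ℝ) (hψ : ∀ t, ψ t = (Me t).det)
    (R : ℝ → Fin q → ℝ) (hR : ∀ t, R t = (Me t).adjugate.mulVec (Re t))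
    (k : Fin q → ℝ) (hk : ∀ i, k i > 0)
    (rhat : ℝ → Fin q → ℝ)
    (hrhat : ∀ t ≥ (0 : ℝ), ∀ i : Fin q,
      HasDerivAt (fun s => rhat s i) (k i * ψ t * (R t i - ψ t * rhat t i)) t)
    (hL2 : Filter.Tendsto (fun t => ∫ s in (0 : ℝ)..t, (ψ s) ^ 2)
      Filter.atTop Filter.atTop) :
    ∀ i : Fin q, Filter.Tendsto (fun t => rhat t i) Filter.atTop (nhds (r i)) := by
  intro i
  -- continuity of Me and ψ
  have hMe_cont : Continuous Me := by
    apply continuous_pi; intro a; apply continuous_pi; intro b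
    simp only [hMe]
    by_cases h : (a : ℕ) = 0
    · simp only [dif_pos h]
      exact (continuous_apply b).comp hm_cont
    · simp only [dif_neg h]
      exact (continuous_apply b).comp (hm_cont.comp (continuous_id.sub continuous_const))
  have hψc : Continuous ψ := by
    have : ψ = fun t => (Me t).det := funext hψ
    rw [this]; exact hMe_cont.matrix_det
  -- R t i = ψ t * r i
  have hRψ : ∀ t, R t i = ψ t * r i := by
    intro t
    have hRe' : Re t = (Me t).mulVec r := by
      funext a
      by_cases h : (a : ℕ) = 0
      · simp [hRe, hρ, Matrix.mulVec, dotProduct, hMe, h]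
      · simp [hRe, hρ, Matrix.mulVec, dotProduct, hMe, h]
    rw [hR, hRe', Matrix.mulVec_mulVec, Matrix.adjugate_mul, Matrix.smul_mulVec,
      Matrix.one_mulVec, Pi.smul_apply, smul_eq_mul, hψ]
  -- derivative of the integral
  have hψ2 : Continuous fun s => ψ s ^ 2 := hψc.pow 2
  set g : ℝ → ℝ := fun u => ∫ s in (0 : ℝ)..u, ψ s ^ 2 with hg_def
  have hg : ∀ t, HasDerivAt g (ψ t ^ 2) t := fun t =>
    intervalIntegral.integral_hasDerivAt_right (hψ2.intervalIntegrable _ _)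
      (hψ2.stronglyMeasurableAtFilter _ _) hψ2.continuousAt
  set E : ℝ → ℝ := fun u => (rhat u i - r i) * Real.exp (k i * g u) with hE_def
  have hE' : ∀ t, 0 ≤ t → HasDerivAt E 0 t := by
    intro t ht
    have h1 : HasDerivAt (fun s => rhat s i - r i)
        (k i * ψ t * (R t i - ψ t * rhat t i)) t := (hrhat t ht i).sub_const _
    have h2 : HasDerivAt (fun u => Real.exp (k i * g u))
        (Real.exp (k i * g t) * (k i * ψ t ^ 2)) t := ((hg t).const_mul (k i)).exp
    have h3 := h1.mul h2
    refine h3.congr_deriv ?_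
    rw [hRψ t]; ring
  -- E is constant on [0,∞)
  have hconst : ∀ t, 0 ≤ t → E t = E 0 := by
    intro T hT
    have hcont : ContinuousOn E (Set.Icc 0 T) := fun x hx =>
      ((hE' x hx.1).continuousAt).continuousWithinAt
    have hderiv : ∀ x ∈ Set.Ico (0 : ℝ) T, HasDerivWithinAt E 0 (Set.Ici x) x :=
      fun x hx => (hE' x hx.1).hasDerivWithinAt
    exact constant_of_has_deriv_right_zero hcont hderiv T ⟨hT, le_refl T⟩
  -- limit
  have hlim : Filter.Tendsto (fun t => k i * g t) Filter.atTop Filter.atTop :=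
    hL2.const_mul_atTop (hk i)
  have hexp : Filter.Tendsto (fun t => Real.exp (-(k i * g t))) Filter.atTop (nhds 0) :=
    Real.tendsto_exp_atBot.comp (Filter.tendsto_neg_atTop_atBot.comp hlim)
  have hfin : Filter.Tendsto (fun t => r i + E 0 * Real.exp (-(k i * g t)))
      Filter.atTop (nhds (r i)) := by
    have h1 : Filter.Tendsto (fun t : ℝ => E 0 * Real.exp (-(k i * g t)))
        Filter.atTop (nhds (E 0 * 0)) := (tendsto_const_nhds (x := E 0)).mul hexp
    have h2 := (tendsto_const_nhds (x := r i) (f := Filter.atTop (α := ℝ))).add h1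
    simpa using h2
  refine Filter.Tendsto.congr' ?_ hfin
  filter_upwards [Filter.eventually_ge_atTop (0 : ℝ)] with t ht
  have hEt := hconst t ht
  have hkey : rhat t i - r i = E 0 * Real.exp (-(k i * g t)) := by
    rw [← hEt]
    simp only [hE_def]
    rw [mul_assoc, ← Real.exp_add]
    simp
  linarith
end

section
/- (Scalar error dynamics with exponentially decaying perturbation.) Let k > 0, let ψ : ℝ → ℝ be continuous and bounded, and suppose ψ is persistently exciting: there exist T, δ₀ > 0 with ∫_t^{t+T} ψ(s)² ds ≥ δ₀ for all t ≥ 0. Let δ : ℝ → ℝ be continuous with |δ(t)| ≤ C₀ e^{−λ₀ t} for all t ≥ 0, for some C₀ ≥ 0 and λ₀ > 0. If x : ℝ → ℝ is differentiable on [0,∞) with x'(t) = −k ψ(t)² x(t) + k ψ(t) δ(t) for all t ≥ 0, then there exist C ≥ 0 and λ > 0 such that |x(t)| ≤ C e^{−λ t} for all t ≥ 0; in particular x(t) → 0 as t → ∞. -/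
open intervalIntegral Real

set_option maxHeartbeats 1000000

/-- scalar DREM error dynamics with an exponentially decaying
perturbation, `x' = -k ψ² x + k ψ δ`, under persistent excitation of `ψ`:
`x` converges to zero exponentially fast. -/
theorem statement10 (k : ℝ) (hk : k > 0) (ψ : ℝ → ℝ) (hψ_cont : Continuous ψ)
    (hψ_bdd : ∃ c : ℝ, ∀ t, |ψ t| ≤ c)
    (T δ₀ : ℝ) (hT : T > 0) (hδ₀ : δ₀ > 0)
    (hPE : ∀ t ≥ (0 : ℝ), δ₀ ≤ ∫ s in t..(t + T), (ψ s) ^ 2)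
    (δ : ℝ → ℝ) (hδ_cont : Continuous δ)
    (C₀ lam₀ : ℝ) (hC₀ : C₀ ≥ 0) (hlam₀ : lam₀ > 0)
    (hδ_dec : ∀ t ≥ (0 : ℝ), |δ t| ≤ C₀ * Real.exp (-lam₀ * t))
    (x : ℝ → ℝ)
    (hx : ∀ t ≥ (0 : ℝ), HasDerivAt x (-k * (ψ t) ^ 2 * x t + k * ψ t * δ t) t) :
    (∃ C ≥ (0 : ℝ), ∃ lam > (0 : ℝ), ∀ t ≥ (0 : ℝ),
      |x t| ≤ C * Real.exp (-lam * t)) ∧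
    Filter.Tendsto x Filter.atTop (nhds 0) := by
  obtain ⟨c, hc⟩ := hψ_bdd
  have hc0 : 0 ≤ c := le_trans (abs_nonneg _) (hc 0)
  have hψ2_cont : Continuous fun s => ψ s ^ 2 := hψ_cont.pow 2
  set Φ : ℝ → ℝ := fun t => ∫ s in (0:ℝ)..t, ψ s ^ 2 with hΦdef
  have hΦdiff : ∀ t : ℝ, HasDerivAt Φ (ψ t ^ 2) t := by
    intro t
    exact intervalIntegral.integral_hasDerivAt_right
      (hψ2_cont.intervalIntegrable _ _)
      (hψ2_cont.aestronglyMeasurable.stronglyMeasurableAtFilter)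
      hψ2_cont.continuousAt
  have hΦcont : Continuous Φ :=
    continuous_iff_continuousAt.2 fun t => (hΦdiff t).continuousAt
  have hΦ0 : Φ 0 = 0 := by simp [hΦdef]
  -- block lemma
  have hblock : ∀ n : ℕ, ∀ s : ℝ, 0 ≤ s →
      (n : ℝ) * δ₀ ≤ ∫ u in s..(s + n * T), ψ u ^ 2 := by
    intro n
    induction n with
    | zero => intro s hs; simp
    | succ n ih =>
      intro s hs
      have hadj : (∫ u in s..(s + n * T), ψ u ^ 2)
          + ∫ u in (s + n * T)..(s + n * T + T), ψ u ^ 2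
          = ∫ u in s..(s + n * T + T), ψ u ^ 2 :=
        intervalIntegral.integral_add_adjacent_intervals
          (hψ2_cont.intervalIntegrable _ _) (hψ2_cont.intervalIntegrable _ _)
      have h1 := ih s hs
      have h2 := hPE (s + n * T) (by positivity)
      have heq : s + (n + 1 : ℕ) * T = s + n * T + T := by push_cast; ring
      rw [heq]
      rw [← hadj]
      push_cast
      linarith
  -- lower bound on ∫ s..t ψ²
  have hlower : ∀ s t : ℝ, 0 ≤ s → s ≤ t →
      δ₀ * ((t - s) / T) - δ₀ ≤ ∫ u in s..t, ψ u ^ 2 := by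
    intro s t hs hst
    set n := ⌊(t - s) / T⌋₊ with hn
    have hdiv0 : 0 ≤ (t - s) / T := div_nonneg (by linarith) hT.le
    have hnle : (n : ℝ) * T ≤ t - s := by
      have := Nat.floor_le hdiv0
      calc (n : ℝ) * T ≤ ((t - s) / T) * T := by
            apply mul_le_mul_of_nonneg_right this hT.le
        _ = t - s := by field_simp
    have hnge : (t - s) / T - 1 ≤ (n : ℝ) := by
      have := Nat.lt_floor_add_one ((t - s) / T)
      linarith
    have hadj : (∫ u in s..(s + n * T), ψ u ^ 2)
        + ∫ u in (s + n * T)..t, ψ u ^ 2 = ∫ u in s..t, ψ u ^ 2 :=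
      intervalIntegral.integral_add_adjacent_intervals
        (hψ2_cont.intervalIntegrable _ _) (hψ2_cont.intervalIntegrable _ _)
    have hpos : 0 ≤ ∫ u in (s + n * T)..t, ψ u ^ 2 :=
      intervalIntegral.integral_nonneg (by linarith) (fun u _ => sq_nonneg _)
    have h1 := hblock n s hs
    have : δ₀ * ((t - s) / T) - δ₀ ≤ (n : ℝ) * δ₀ := by nlinarith
    linarith
  -- exponential estimate on the transition factor
  set a : ℝ := k * δ₀ / T with ha
  have ha_pos : 0 < a := by positivity
  have hest : ∀ s t : ℝ, 0 ≤ s → s ≤ t →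
      Real.exp (k * Φ s - k * Φ t) ≤ Real.exp (k * δ₀) * Real.exp (-a * (t - s)) := by
    intro s t hs hst
    have hsub : Φ t - Φ s = ∫ u in s..t, ψ u ^ 2 :=
      intervalIntegral.integral_interval_sub_left
        (hψ2_cont.intervalIntegrable _ _) (hψ2_cont.intervalIntegrable _ _)
    have h1 := hlower s t hs hst
    rw [← Real.exp_add]
    apply Real.exp_le_exp.2
    have : δ₀ * ((t - s) / T) = a * (t - s) / k := by rw [ha]; field_simp
    have hΦts : δ₀ * ((t - s) / T) - δ₀ ≤ Φ t - Φ s := by rw [hsub]; exact h1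
    have hk' : k * (δ₀ * ((t - s) / T) - δ₀) ≤ k * (Φ t - Φ s) :=
      mul_le_mul_of_nonneg_left hΦts hk.le
    have : k * (δ₀ * ((t - s) / T)) = a * (t - s) := by rw [ha]; field_simp
    nlinarith [hk']
  -- y and its derivative
  set y : ℝ → ℝ := fun t => x t * Real.exp (k * Φ t) with hy
  have hyderiv : ∀ t : ℝ, 0 ≤ t →
      HasDerivAt y (k * ψ t * δ t * Real.exp (k * Φ t)) t := by
    intro t ht
    have h2 : HasDerivAt (fun u => Real.exp (k * Φ u))
        (Real.exp (k * Φ t) * (k * ψ t ^ 2)) t := ((hΦdiff t).const_mul k).exp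
    have : HasDerivAt (fun u => x u * Real.exp (k * Φ u))
        ((-k * ψ t ^ 2 * x t + k * ψ t * δ t) * Real.exp (k * Φ t) +
          x t * (Real.exp (k * Φ t) * (k * ψ t ^ 2))) t := (hx t ht).mul h2
    convert this using 1
    ring
  have hg_cont : Continuous fun s => k * ψ s * δ s * Real.exp (k * Φ s) :=
    ((continuous_const.mul hψ_cont).mul hδ_cont).mul
      (Real.continuous_exp.comp (continuous_const.mul hΦcont))
  have hy_eq : ∀ t : ℝ, 0 ≤ t →
      y t = y 0 + ∫ s in (0:ℝ)..t, k * ψ s * δ s * Real.exp (k * Φ s) := by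
    intro t ht
    have := intervalIntegral.integral_eq_sub_of_hasDerivAt
      (f := y) (f' := fun s => k * ψ s * δ s * Real.exp (k * Φ s))
      (a := 0) (b := t)
      (fun s hs => hyderiv s (by
        rw [Set.uIcc_of_le ht] at hs; exact hs.1))
      (hg_cont.intervalIntegrable _ _)
    linarith [this]
  -- constants
  set m : ℝ := min a lam₀ with hm
  have hm_pos : 0 < m := lt_min ha_pos hlam₀
  set lam : ℝ := m / 2 with hlam
  have hlam_pos : 0 < lam := by positivity
  set K : ℝ := k * c * C₀ * Real.exp (k * δ₀) with hK
  have hK0 : 0 ≤ K := by positivity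
  set C : ℝ := Real.exp (k * δ₀) * |x 0| + K / lam with hC
  have hC0 : 0 ≤ C := by positivity
  have hbound : ∀ t : ℝ, 0 ≤ t → |x t| ≤ C * Real.exp (-lam * t) := by
    intro t ht
    have hexp_pos : (0:ℝ) < Real.exp (k * Φ t) := Real.exp_pos _
    have hxy : x t = y t * Real.exp (-(k * Φ t)) := by
      simp only [hy]
      rw [mul_assoc, ← Real.exp_add]
      norm_num
    -- |y t| bound
    have hyb : |y t| ≤ |x 0| + ∫ s in (0:ℝ)..t, |k * ψ s * δ s * Real.exp (k * Φ s)| := by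
      rw [hy_eq t ht]
      have h1 : |y 0 + ∫ s in (0:ℝ)..t, k * ψ s * δ s * Real.exp (k * Φ s)|
          ≤ |y 0| + |∫ s in (0:ℝ)..t, k * ψ s * δ s * Real.exp (k * Φ s)| :=
        abs_add_le _ _
      have h2 : |∫ s in (0:ℝ)..t, k * ψ s * δ s * Real.exp (k * Φ s)|
          ≤ ∫ s in (0:ℝ)..t, |k * ψ s * δ s * Real.exp (k * Φ s)| :=
        intervalIntegral.abs_integral_le_integral_abs ht
      have hy0 : y 0 = x 0 := by simp [hy, hΦ0]
      rw [hy0] at h1 ⊢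
      linarith
    -- pointwise bound of weighted integrand
    have hpt : ∀ s ∈ Set.Icc (0:ℝ) t,
        Real.exp (-(k * Φ t)) * |k * ψ s * δ s * Real.exp (k * Φ s)|
          ≤ K * Real.exp (-m * t) := by
      intro s hs
      obtain ⟨hs0, hst⟩ := hs
      have e1 : Real.exp (-(k * Φ t)) * |k * ψ s * δ s * Real.exp (k * Φ s)|
          = k * |ψ s| * |δ s| * Real.exp (k * Φ s - k * Φ t) := by
        rw [abs_mul, abs_mul, abs_mul, abs_of_pos hk, abs_of_pos (Real.exp_pos _),
          Real.exp_sub, Real.exp_neg, div_eq_mul_inv]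
        ring
      rw [e1]
      have h1 : Real.exp (k * Φ s - k * Φ t)
          ≤ Real.exp (k * δ₀) * Real.exp (-a * (t - s)) := hest s t hs0 hst
      have h2 : |δ s| ≤ C₀ * Real.exp (-lam₀ * s) := hδ_dec s hs0
      have h3 : Real.exp (-a * (t - s)) * Real.exp (-lam₀ * s) ≤ Real.exp (-m * t) := by
        rw [← Real.exp_add]
        apply Real.exp_le_exp.2
        have hma : m ≤ a := min_le_left _ _
        have hml : m ≤ lam₀ := min_le_right _ _
        nlinarith
      calc k * |ψ s| * |δ s| * Real.exp (k * Φ s - k * Φ t)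
          ≤ k * c * (C₀ * Real.exp (-lam₀ * s)) *
              (Real.exp (k * δ₀) * Real.exp (-a * (t - s))) := by
            apply mul_le_mul _ h1 (Real.exp_pos _).le (by positivity)
            have := hc s
            apply mul_le_mul _ h2 (abs_nonneg _) (by positivity)
            nlinarith [abs_nonneg (ψ s)]
        _ = k * c * C₀ * Real.exp (k * δ₀) *
              (Real.exp (-a * (t - s)) * Real.exp (-lam₀ * s)) := by ring
        _ ≤ K * Real.exp (-m * t) := by
            rw [hK]
            apply mul_le_mul_of_nonneg_left h3 (by positivity)
    -- integral bound
    have hint : Real.exp (-(k * Φ t)) *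
        (∫ s in (0:ℝ)..t, |k * ψ s * δ s * Real.exp (k * Φ s)|)
        ≤ t * (K * Real.exp (-m * t)) := by
      have hcont2 : Continuous fun s =>
          Real.exp (-(k * Φ t)) * |k * ψ s * δ s * Real.exp (k * Φ s)| :=
        continuous_const.mul hg_cont.abs
      have := intervalIntegral.integral_mono_on ht
        (hcont2.intervalIntegrable _ _)
        (intervalIntegrable_const : IntervalIntegrable (fun _ => K * Real.exp (-m * t)) MeasureTheory.volume 0 t)
        hpt
      rw [← intervalIntegral.integral_const_mul]
      have hre : t * (K * Real.exp (-m * t)) = K * (t * Real.exp (-(m * t))) := by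
        rw [neg_mul]; ring
      rw [hre]
      simpa using this
    have hxabs : |x t| = Real.exp (-(k * Φ t)) * |y t| := by
      rw [hxy, abs_mul, abs_of_pos (Real.exp_pos _)]; ring
    have hstep : |x t| ≤ Real.exp (-(k * Φ t)) * |x 0| + t * (K * Real.exp (-m * t)) := by
      rw [hxabs]
      have := mul_le_mul_of_nonneg_left hyb (Real.exp_pos (-(k * Φ t))).le
      rw [mul_add] at this
      linarith
    -- first term
    have hfirst : Real.exp (-(k * Φ t)) ≤ Real.exp (k * δ₀) * Real.exp (-lam * t) := by
      have := hest 0 t le_rfl ht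
      rw [hΦ0] at this
      simp only [mul_zero, zero_sub] at this
      have h2 : Real.exp (-a * (t - 0)) ≤ Real.exp (-lam * t) := by
        apply Real.exp_le_exp.2
        have hla : lam ≤ a := by
          rw [hlam]
          have h4 := min_le_left a lam₀
          rw [← hm] at h4
          linarith
        nlinarith [mul_le_mul_of_nonneg_right hla ht]
      calc Real.exp (-(k * Φ t)) ≤ Real.exp (k * δ₀) * Real.exp (-a * (t - 0)) := this
        _ ≤ Real.exp (k * δ₀) * Real.exp (-lam * t) :=
            mul_le_mul_of_nonneg_left h2 (Real.exp_pos _).le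
    -- second term: t * exp(-m t) ≤ (1/lam) exp(-lam t)
    have hsecond : t * Real.exp (-m * t) ≤ (1 / lam) * Real.exp (-lam * t) := by
      have h1 : t * Real.exp (-lam * t) ≤ 1 / lam := by
        have h2 : lam * t ≤ Real.exp (lam * t) := by
          linarith [Real.add_one_le_exp (lam * t)]
        rw [le_div_iff₀ hlam_pos, neg_mul, Real.exp_neg]
        calc t * (Real.exp (lam * t))⁻¹ * lam
            = (lam * t) * (Real.exp (lam * t))⁻¹ := by ring
          _ ≤ Real.exp (lam * t) * (Real.exp (lam * t))⁻¹ :=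
              mul_le_mul_of_nonneg_right h2 (inv_nonneg.2 (Real.exp_pos _).le)
          _ = 1 := mul_inv_cancel₀ (Real.exp_pos _).ne'
      have hmeq : -m * t = -lam * t + -lam * t := by rw [hlam]; ring
      calc t * Real.exp (-m * t)
          = (t * Real.exp (-lam * t)) * Real.exp (-lam * t) := by
            rw [hmeq, Real.exp_add]; ring
        _ ≤ (1 / lam) * Real.exp (-lam * t) :=
            mul_le_mul_of_nonneg_right h1 (Real.exp_pos _).le
    -- combine
    have e1 : Real.exp (-(k * Φ t)) * |x 0| ≤ Real.exp (k * δ₀) * |x 0| * Real.exp (-lam * t) := by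
      have := mul_le_mul_of_nonneg_right hfirst (abs_nonneg (x 0))
      nlinarith [Real.exp_pos (-lam * t)]
    have e2 : t * (K * Real.exp (-m * t)) ≤ (K / lam) * Real.exp (-lam * t) := by
      have := mul_le_mul_of_nonneg_left hsecond hK0
      calc t * (K * Real.exp (-m * t)) = K * (t * Real.exp (-m * t)) := by ring
        _ ≤ K * ((1 / lam) * Real.exp (-lam * t)) := this
        _ = (K / lam) * Real.exp (-lam * t) := by ring
    calc |x t| ≤ Real.exp (-(k * Φ t)) * |x 0| + t * (K * Real.exp (-m * t)) := hstep
      _ ≤ Real.exp (k * δ₀) * |x 0| * Real.exp (-lam * t) + (K / lam) * Real.exp (-lam * t) := by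
          linarith
      _ = C * Real.exp (-lam * t) := by rw [hC]; ring
  refine ⟨⟨C, hC0, lam, hlam_pos, hbound⟩, ?_⟩
  apply squeeze_zero_norm' (a := fun t => C * Real.exp (-lam * t))
  · exact Filter.eventually_atTop.2 ⟨0, fun t ht => by
      simpa [Real.norm_eq_abs] using hbound t ht⟩
  · have h1 : Filter.Tendsto (fun t : ℝ => lam * t) Filter.atTop Filter.atTop :=
      Filter.Tendsto.const_mul_atTop hlam_pos Filter.tendsto_id
    have h2 : Filter.Tendsto (fun t : ℝ => Real.exp (-(lam * t))) Filter.atTop (nhds 0) :=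
      Real.tendsto_exp_neg_atTop_nhds_zero.comp h1
    have h3 := h2.const_mul C
    rw [mul_zero] at h3
    have heq : (fun t : ℝ => C * Real.exp (-lam * t))
        = fun t : ℝ => C * Real.exp (-(lam * t)) := by
      funext u; rw [neg_mul]
    rw [heq]
    exact h3
end

section
/- (Decomposition of the excitation integral for N = 2.) Let B_1, B_2 > 0, let ω_1, ω_2 > 0 with ω_1 ≠ ω_2, let φ̄_1, φ̄_2 ∈ ℝ and d > 0. Define s_i(t) = B_i sin(ω_i t + φ̄_i), ξ_1(t) = s_1(t) + s_2(t), ξ_3(t) = −(ω_1² s_1(t) + ω_2² s_2(t)), and Φ_e(t) the 2×2 matrix with rows (ξ_3(t), ξ_1(t)) and (ξ_3(t−d), ξ_1(t−d)). Set C_lin = ½ B_1² B_2² (ω_1² − ω_2²)² (1 − cos(d ω_1) cos(d ω_2)). Then the function t ↦ ∫_0^t (det Φ_e(s))² ds − C_lin · t is bounded on [0,∞); in particular (1/t) ∫_0^t (det Φ_e(s))² ds → C_lin as t → ∞. -/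
private lemma hasDerivAt_sin_lin (c e t : ℝ) :
    HasDerivAt (fun t => Real.sin (c * t + e)) (c * Real.cos (c * t + e)) t := by
  have h1 : HasDerivAt (fun t : ℝ => c * t + e) c t := by
    simpa using ((hasDerivAt_id t).const_mul c).add_const e
  exact ((Real.hasDerivAt_sin (c * t + e)).comp t h1).congr_deriv (mul_comm _ _)

private lemma trig_sq_id (P Q X Y : ℝ) :
    (-(Real.sin P) * Real.sin X - Real.sin Q * Real.sin Y) ^ 2
      = (Real.sin P ^ 2 + Real.sin Q ^ 2) / 2
        - Real.sin P ^ 2 / 2 * Real.cos (2 * X)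
        - Real.sin Q ^ 2 / 2 * Real.cos (2 * Y)
        + Real.sin P * Real.sin Q * Real.cos (X - Y)
        - Real.sin P * Real.sin Q * Real.cos (X + Y) := by
  rw [Real.cos_two_mul, Real.cos_two_mul, Real.cos_sub, Real.cos_add]
  linear_combination Real.sin P ^ 2 * Real.sin_sq_add_cos_sq X +
    Real.sin Q ^ 2 * Real.sin_sq_add_cos_sq Y

noncomputable def Hf (ω₁ ω₂ phb₁ phb₂ p q : ℝ) (t : ℝ) : ℝ :=
  -(Real.sin p) ^ 2 / (4 * (ω₂ - ω₁)) * Real.sin (2 * (ω₂ - ω₁) * t + 2 * (phb₂ - phb₁ + q))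
  + -(Real.sin q) ^ 2 / (4 * (ω₁ + ω₂)) * Real.sin (2 * (ω₁ + ω₂) * t + 2 * (phb₁ + phb₂ - p))
  + Real.sin p * Real.sin q / (-2 * ω₁) * Real.sin (-2 * ω₁ * t + (p + q - 2 * phb₁))
  + -(Real.sin p * Real.sin q) / (2 * ω₂) * Real.sin (2 * ω₂ * t + (2 * phb₂ + q - p))

private lemma Gf_deriv (ω₁ ω₂ phb₁ phb₂ p q : ℝ) (h1 : ω₁ ≠ 0) (h2 : ω₂ ≠ 0)
    (h12 : ω₂ - ω₁ ≠ 0) (h3 : ω₁ + ω₂ ≠ 0) (t : ℝ) :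
    HasDerivAt (fun t => (Real.sin p ^ 2 + Real.sin q ^ 2) / 2 * t + Hf ω₁ ω₂ phb₁ phb₂ p q t)
      ((-(Real.sin p) * Real.sin ((ω₂ * t + phb₂) - (ω₁ * t + phb₁) + q)
        - Real.sin q * Real.sin ((ω₁ * t + phb₁) + (ω₂ * t + phb₂) - p)) ^ 2) t := by
  have hlin : HasDerivAt (fun t : ℝ => (Real.sin p ^ 2 + Real.sin q ^ 2) / 2 * t)
      ((Real.sin p ^ 2 + Real.sin q ^ 2) / 2) t := by
    simpa using (hasDerivAt_id t).const_mul ((Real.sin p ^ 2 + Real.sin q ^ 2) / 2)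
  have hs1 := (hasDerivAt_sin_lin (2 * (ω₂ - ω₁)) (2 * (phb₂ - phb₁ + q)) t).const_mul
      (-(Real.sin p) ^ 2 / (4 * (ω₂ - ω₁)))
  have hs2 := (hasDerivAt_sin_lin (2 * (ω₁ + ω₂)) (2 * (phb₁ + phb₂ - p)) t).const_mul
      (-(Real.sin q) ^ 2 / (4 * (ω₁ + ω₂)))
  have hs3 := (hasDerivAt_sin_lin (-2 * ω₁) (p + q - 2 * phb₁) t).const_mul
      (Real.sin p * Real.sin q / (-2 * ω₁))
  have hs4 := (hasDerivAt_sin_lin (2 * ω₂) (2 * phb₂ + q - p) t).const_mul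
      (-(Real.sin p * Real.sin q) / (2 * ω₂))
  have h := hlin.add (((hs1.add hs2).add hs3).add hs4)
  have heq :
      (Real.sin p ^ 2 + Real.sin q ^ 2) / 2
      + (-(Real.sin p) ^ 2 / (4 * (ω₂ - ω₁)) * (2 * (ω₂ - ω₁) *
          Real.cos (2 * (ω₂ - ω₁) * t + 2 * (phb₂ - phb₁ + q)))
        + -(Real.sin q) ^ 2 / (4 * (ω₁ + ω₂)) * (2 * (ω₁ + ω₂) *
          Real.cos (2 * (ω₁ + ω₂) * t + 2 * (phb₁ + phb₂ - p)))
        + Real.sin p * Real.sin q / (-2 * ω₁) * (-2 * ω₁ *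
          Real.cos (-2 * ω₁ * t + (p + q - 2 * phb₁)))
        + -(Real.sin p * Real.sin q) / (2 * ω₂) * (2 * ω₂ *
          Real.cos (2 * ω₂ * t + (2 * phb₂ + q - p))))
      = (-(Real.sin p) * Real.sin ((ω₂ * t + phb₂) - (ω₁ * t + phb₁) + q)
        - Real.sin q * Real.sin ((ω₁ * t + phb₁) + (ω₂ * t + phb₂) - p)) ^ 2 := by
    rw [trig_sq_id]
    rw [show 2 * ((ω₂ * t + phb₂) - (ω₁ * t + phb₁) + q)
        = 2 * (ω₂ - ω₁) * t + 2 * (phb₂ - phb₁ + q) by ring,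
      show 2 * ((ω₁ * t + phb₁) + (ω₂ * t + phb₂) - p)
        = 2 * (ω₁ + ω₂) * t + 2 * (phb₁ + phb₂ - p) by ring,
      show ((ω₂ * t + phb₂) - (ω₁ * t + phb₁) + q) - ((ω₁ * t + phb₁) + (ω₂ * t + phb₂) - p)
        = -2 * ω₁ * t + (p + q - 2 * phb₁) by ring,
      show ((ω₂ * t + phb₂) - (ω₁ * t + phb₁) + q) + ((ω₁ * t + phb₁) + (ω₂ * t + phb₂) - p)
        = 2 * ω₂ * t + (2 * phb₂ + q - p) by ring]
    field_simp
    ring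
  rw [← heq]
  exact h

private lemma f_lin_id (u v p q : ℝ) :
    Real.sin v * Real.sin (u - (p + q)) - Real.sin u * Real.sin (v - (p - q))
      = -(Real.sin p) * Real.sin (v - u + q) - Real.sin q * Real.sin (u + v - p) := by
  simp only [Real.sin_sub, Real.sin_add, Real.cos_sub, Real.cos_add]
  ring

private lemma pyth_id (p q : ℝ) :
    1 - Real.cos (p + q) * Real.cos (p - q) = Real.sin p ^ 2 + Real.sin q ^ 2 := by
  rw [Real.cos_add, Real.cos_sub]
  linear_combination (Real.sin q ^ 2 - 1) * Real.sin_sq_add_cos_sq p -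
    Real.cos p ^ 2 * Real.sin_sq_add_cos_sq q

private lemma Hf_bound (ω₁ ω₂ phb₁ phb₂ p q t : ℝ) :
    |Hf ω₁ ω₂ phb₁ phb₂ p q t|
      ≤ |(-(Real.sin p) ^ 2 / (4 * (ω₂ - ω₁)))| + |(-(Real.sin q) ^ 2 / (4 * (ω₁ + ω₂)))|
        + |(Real.sin p * Real.sin q / (-2 * ω₁))| + |(-(Real.sin p * Real.sin q) / (2 * ω₂))| := by
  have key : ∀ A x : ℝ, |A * Real.sin x| ≤ |A| := fun A x => by
    rw [abs_mul]
    exact mul_le_of_le_one_right (abs_nonneg _)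
      (abs_le.mpr ⟨Real.neg_one_le_sin x, Real.sin_le_one x⟩)
  unfold Hf
  calc _ ≤ |(-(Real.sin p) ^ 2 / (4 * (ω₂ - ω₁)) * Real.sin (2 * (ω₂ - ω₁) * t + 2 * (phb₂ - phb₁ + q))
      + -(Real.sin q) ^ 2 / (4 * (ω₁ + ω₂)) * Real.sin (2 * (ω₁ + ω₂) * t + 2 * (phb₁ + phb₂ - p))
      + Real.sin p * Real.sin q / (-2 * ω₁) * Real.sin (-2 * ω₁ * t + (p + q - 2 * phb₁)))|
      + |(-(Real.sin p * Real.sin q) / (2 * ω₂) * Real.sin (2 * ω₂ * t + (2 * phb₂ + q - p)))| :=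
        abs_add_le _ _
    _ ≤ (|(-(Real.sin p) ^ 2 / (4 * (ω₂ - ω₁)) * Real.sin (2 * (ω₂ - ω₁) * t + 2 * (phb₂ - phb₁ + q))
      + -(Real.sin q) ^ 2 / (4 * (ω₁ + ω₂)) * Real.sin (2 * (ω₁ + ω₂) * t + 2 * (phb₁ + phb₂ - p)))|
      + |(Real.sin p * Real.sin q / (-2 * ω₁) * Real.sin (-2 * ω₁ * t + (p + q - 2 * phb₁)))|)
      + |(-(Real.sin p * Real.sin q) / (2 * ω₂) * Real.sin (2 * ω₂ * t + (2 * phb₂ + q - p)))| := by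
        gcongr; exact abs_add_le _ _
    _ ≤ ((|(-(Real.sin p) ^ 2 / (4 * (ω₂ - ω₁)) * Real.sin (2 * (ω₂ - ω₁) * t + 2 * (phb₂ - phb₁ + q)))|
      + |(-(Real.sin q) ^ 2 / (4 * (ω₁ + ω₂)) * Real.sin (2 * (ω₁ + ω₂) * t + 2 * (phb₁ + phb₂ - p)))|)
      + |(Real.sin p * Real.sin q / (-2 * ω₁) * Real.sin (-2 * ω₁ * t + (p + q - 2 * phb₁)))|)
      + |(-(Real.sin p * Real.sin q) / (2 * ω₂) * Real.sin (2 * ω₂ * t + (2 * phb₂ + q - p)))| := by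
        gcongr; exact abs_add_le _ _
    _ ≤ _ :=
        add_le_add (add_le_add (add_le_add (key _ _) (key _ _)) (key _ _)) (key _ _)
/-- decomposition of the excitation integral for `N = 2`:
`∫_0^t (det Φ_e)² ds = C_lin t + bounded`, with
`C_lin = ½ B₁²B₂²(ω₁²-ω₂²)²(1 - cos(dω₁)cos(dω₂))`; in particular
`(1/t) ∫_0^t (det Φ_e)² ds → C_lin`. -/
theorem statement14 (B₁ B₂ ω₁ ω₂ phb₁ phb₂ d : ℝ)
    (hB₁ : B₁ > 0) (hB₂ : B₂ > 0) (hω₁ : ω₁ > 0) (hω₂ : ω₂ > 0)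
    (hω : ω₁ ≠ ω₂) (hd : d > 0)
    (s₁ s₂ : ℝ → ℝ)
    (hs₁ : ∀ t, s₁ t = B₁ * Real.sin (ω₁ * t + phb₁))
    (hs₂ : ∀ t, s₂ t = B₂ * Real.sin (ω₂ * t + phb₂))
    (ξ₁ ξ₃ : ℝ → ℝ)
    (hξ₁ : ∀ t, ξ₁ t = s₁ t + s₂ t)
    (hξ₃ : ∀ t, ξ₃ t = -(ω₁ ^ 2 * s₁ t + ω₂ ^ 2 * s₂ t))
    (Φe : ℝ → Matrix (Fin 2) (Fin 2) ℝ)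
    (hΦe : ∀ t, Φe t = !![ξ₃ t, ξ₁ t; ξ₃ (t - d), ξ₁ (t - d)])
    (Clin : ℝ)
    (hClin : Clin = 1 / 2 * B₁ ^ 2 * B₂ ^ 2 * (ω₁ ^ 2 - ω₂ ^ 2) ^ 2 *
      (1 - Real.cos (d * ω₁) * Real.cos (d * ω₂))) :
    (∃ M : ℝ, ∀ t ≥ (0 : ℝ),
      |(∫ s in (0 : ℝ)..t, ((Φe s).det) ^ 2) - Clin * t| ≤ M) ∧
    Filter.Tendsto (fun t => (1 / t) * ∫ s in (0 : ℝ)..t, ((Φe s).det) ^ 2)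
      Filter.atTop (nhds Clin) := by
  have hw1 : ω₁ ≠ 0 := ne_of_gt hω₁
  have hw2 : ω₂ ≠ 0 := ne_of_gt hω₂
  have hw12 : ω₂ - ω₁ ≠ 0 := sub_ne_zero.mpr (Ne.symm hω)
  have hw3 : ω₁ + ω₂ ≠ 0 := ne_of_gt (by linarith)
  set p := (d * ω₁ + d * ω₂) / 2 with hp
  set q := (d * ω₁ - d * ω₂) / 2 with hq
  set K := (ω₁ ^ 2 - ω₂ ^ 2) * (B₁ * B₂) with hKdef
  set f : ℝ → ℝ := fun t => Real.sin (ω₂ * t + phb₂) * Real.sin (ω₁ * t + phb₁ - d * ω₁)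
      - Real.sin (ω₁ * t + phb₁) * Real.sin (ω₂ * t + phb₂ - d * ω₂) with hfdef
  have hpq1 : d * ω₁ = p + q := by rw [hp, hq]; ring
  have hpq2 : d * ω₂ = p - q := by rw [hp, hq]; ring
  have hdet : ∀ t, (Φe t).det = K * f t := by
    intro t
    rw [hΦe t, Matrix.det_fin_two_of]
    simp only [hξ₁, hξ₃, hs₁, hs₂, hfdef, hKdef]
    rw [show ω₁ * (t - d) + phb₁ = ω₁ * t + phb₁ - d * ω₁ by ring,
        show ω₂ * (t - d) + phb₂ = ω₂ * t + phb₂ - d * ω₂ by ring]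
    ring
  have hkey : ∀ t, f t
      = -(Real.sin p) * Real.sin ((ω₂ * t + phb₂) - (ω₁ * t + phb₁) + q)
        - Real.sin q * Real.sin ((ω₁ * t + phb₁) + (ω₂ * t + phb₂) - p) := by
    intro t
    simp only [hfdef]
    rw [hpq1, hpq2]
    exact f_lin_id (ω₁ * t + phb₁) (ω₂ * t + phb₂) p q
  have hC0 : Clin = K ^ 2 * ((Real.sin p ^ 2 + Real.sin q ^ 2) / 2) := by
    rw [hClin, hpq1, hpq2, pyth_id, hKdef]; ring
  have hfc : Continuous f := by
    rw [hfdef]; fun_prop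
  have hG : ∀ s : ℝ, HasDerivAt
      (fun t => (Real.sin p ^ 2 + Real.sin q ^ 2) / 2 * t + Hf ω₁ ω₂ phb₁ phb₂ p q t)
      (f s ^ 2) s := by
    intro s
    rw [hkey s]
    exact Gf_deriv ω₁ ω₂ phb₁ phb₂ p q hw1 hw2 hw12 hw3 s
  have hint : ∀ t : ℝ, (∫ s in (0 : ℝ)..t, ((Φe s).det) ^ 2)
      = Clin * t + K ^ 2 * (Hf ω₁ ω₂ phb₁ phb₂ p q t - Hf ω₁ ω₂ phb₁ phb₂ p q 0) := by
    intro t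
    have h1 : (∫ s in (0 : ℝ)..t, ((Φe s).det) ^ 2)
        = ∫ s in (0 : ℝ)..t, K ^ 2 * f s ^ 2 :=
      intervalIntegral.integral_congr fun s _ => by rw [hdet s]; ring
    rw [h1, intervalIntegral.integral_const_mul]
    have h2 : (∫ s in (0 : ℝ)..t, f s ^ 2)
        = ((Real.sin p ^ 2 + Real.sin q ^ 2) / 2 * t + Hf ω₁ ω₂ phb₁ phb₂ p q t)
          - ((Real.sin p ^ 2 + Real.sin q ^ 2) / 2 * 0 + Hf ω₁ ω₂ phb₁ phb₂ p q 0) :=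
      intervalIntegral.integral_eq_sub_of_hasDerivAt (fun s _ => hG s)
        ((hfc.pow 2).intervalIntegrable 0 t)
    rw [h2, hC0]; ring
  obtain ⟨B0, hB0⟩ : ∃ B0 : ℝ, ∀ t : ℝ, |Hf ω₁ ω₂ phb₁ phb₂ p q t| ≤ B0 :=
    ⟨_, fun t => Hf_bound ω₁ ω₂ phb₁ phb₂ p q t⟩
  have habs : ∀ t : ℝ, |(∫ s in (0 : ℝ)..t, ((Φe s).det) ^ 2) - Clin * t|
      ≤ K ^ 2 * (2 * B0) := by
    intro t
    rw [hint t, show Clin * t + K ^ 2 * (Hf ω₁ ω₂ phb₁ phb₂ p q t - Hf ω₁ ω₂ phb₁ phb₂ p q 0)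
        - Clin * t = K ^ 2 * (Hf ω₁ ω₂ phb₁ phb₂ p q t - Hf ω₁ ω₂ phb₁ phb₂ p q 0) by ring,
      abs_mul, abs_of_nonneg (sq_nonneg K)]
    have h3 : |Hf ω₁ ω₂ phb₁ phb₂ p q t - Hf ω₁ ω₂ phb₁ phb₂ p q 0| ≤ 2 * B0 := by
      have h6 : |Hf ω₁ ω₂ phb₁ phb₂ p q t - Hf ω₁ ω₂ phb₁ phb₂ p q 0|
          ≤ |Hf ω₁ ω₂ phb₁ phb₂ p q t| + |Hf ω₁ ω₂ phb₁ phb₂ p q 0| := by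
        rw [sub_eq_add_neg]
        simpa [abs_neg] using abs_add_le (Hf ω₁ ω₂ phb₁ phb₂ p q t) (-Hf ω₁ ω₂ phb₁ phb₂ p q 0)
      linarith [hB0 t, hB0 0]
    exact mul_le_mul_of_nonneg_left h3 (sq_nonneg K)
  constructor
  · exact ⟨K ^ 2 * (2 * B0), fun t _ => habs t⟩
  · rw [← tendsto_sub_nhds_zero_iff]
    have hg : Filter.Tendsto (fun t : ℝ => K ^ 2 * (2 * B0) * (1 / t))
        Filter.atTop (nhds 0) := by
      have h7 := tendsto_inv_atTop_zero.const_mul (K ^ 2 * (2 * B0))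
      rw [mul_zero] at h7
      simpa [one_div] using h7
    apply squeeze_zero_norm' ?_ hg
    filter_upwards [Filter.eventually_gt_atTop 0] with t ht
    have heq2 : (1 / t) * (∫ s in (0 : ℝ)..t, ((Φe s).det) ^ 2) - Clin
        = (1 / t) * ((∫ s in (0 : ℝ)..t, ((Φe s).det) ^ 2) - Clin * t) := by
      field_simp
    rw [Real.norm_eq_abs, heq2, abs_mul, abs_of_pos (by positivity : (0 : ℝ) < 1 / t),
      mul_comm]
    exact mul_le_mul_of_nonneg_right (habs t) (by positivity)
end

section
/- (Proposition 4.) Let B_1, B_2 > 0, let ω_1, ω_2 > 0 with ω_1 ≠ ω_2, let φ̄_1, φ̄_2 ∈ ℝ, and let d satisfy 0 < d < π / max(ω_1, ω_2). Define s_i(t) = B_i sin(ω_i t + φ̄_i), ξ_1(t) = s_1(t) + s_2(t), ξ_3(t) = −(ω_1² s_1(t) + ω_2² s_2(t)), and Φ_e(t) the 2×2 matrix with rows (ξ_3(t), ξ_1(t)) and (ξ_3(t−d), ξ_1(t−d)). Then det Φ_e is not square integrable on [0,∞): ∫_0^t (det Φ_e(s))² ds → ∞ as t → ∞. -/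
open Real Filter


lemma prodsum (x y : ℝ) : sin x * sin y = (cos (x - y) - cos (x + y)) / 2 := by
  rw [cos_sub, cos_add]; ring

lemma key (u v p q : ℝ) :
    sin u * sin (v - 2*q) - sin v * sin (u - 2*p)
      = -(sin (p+q) * sin (u - v - p + q)) + sin (p-q) * sin (u+v-p-q) := by
  rw [prodsum, prodsum, prodsum, prodsum]
  have h1 : cos (v - (u - 2*p)) = cos (u - (v + 2*p)) := by
    rw [← cos_neg (u - (v + 2*p))]; ring_nf
  have h2 : cos (p + q - (u - v - p + q)) = cos (u - (v + 2*p)) := by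
    rw [← cos_neg (u - (v + 2*p))]; ring_nf
  have h3 : cos (p - q - (u + v - p - q)) = cos (u + v - 2*p) := by
    rw [← cos_neg (u + v - 2*p)]; ring_nf
  rw [h1, h2, h3]
  ring_nf


lemma divA (P Q α β θ₁ θ₂ : ℝ) (hα : α ≠ 0) (hβ : β ≠ 0)
    (hab : α + β ≠ 0) (hab' : α - β ≠ 0) (hQ : Q ≠ 0) :
    Tendsto (fun t => ∫ s in (0:ℝ)..t, (P * sin (α*s+θ₁) + Q * sin (β*s+θ₂))^2)
      atTop atTop := by
  set c : ℝ := (P^2 + Q^2)/2 with hc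
  have hcpos : 0 < c := by positivity
  set F : ℝ → ℝ := fun t => c * t
    - P^2/(4*α) * sin (2*(α*t+θ₁))
    - Q^2/(4*β) * sin (2*(β*t+θ₂))
    + P*Q/(α-β) * sin ((α-β)*t + (θ₁-θ₂))
    - P*Q/(α+β) * sin ((α+β)*t + (θ₁+θ₂)) with hF
  have hderiv : ∀ t : ℝ, HasDerivAt F ((P * sin (α*t+θ₁) + Q * sin (β*t+θ₂))^2) t := by
    intro t
    have l1 : HasDerivAt (fun t : ℝ => α*t+θ₁) α t := by
      simpa using ((hasDerivAt_id t).const_mul α).add_const θ₁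
    have l2 : HasDerivAt (fun t : ℝ => β*t+θ₂) β t := by
      simpa using ((hasDerivAt_id t).const_mul β).add_const θ₂
    have d1 : HasDerivAt (fun t : ℝ => sin (2*(α*t+θ₁))) (cos (2*(α*t+θ₁)) * (2*α)) t := by
      have h : HasDerivAt (fun t : ℝ => 2*(α*t+θ₁)) (2*α) t := by
        simpa [mul_comm] using l1.const_mul 2
      exact (Real.hasDerivAt_sin _).comp t h
    have d2 : HasDerivAt (fun t : ℝ => sin (2*(β*t+θ₂))) (cos (2*(β*t+θ₂)) * (2*β)) t := by
      have h : HasDerivAt (fun t : ℝ => 2*(β*t+θ₂)) (2*β) t := by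
        simpa [mul_comm] using l2.const_mul 2
      exact (Real.hasDerivAt_sin _).comp t h
    have d3 : HasDerivAt (fun t : ℝ => sin ((α-β)*t + (θ₁-θ₂))) (cos ((α-β)*t + (θ₁-θ₂)) * (α-β)) t := by
      have h : HasDerivAt (fun t : ℝ => (α-β)*t + (θ₁-θ₂)) (α-β) t := by
        simpa using ((hasDerivAt_id t).const_mul (α-β)).add_const (θ₁-θ₂)
      exact (Real.hasDerivAt_sin _).comp t h
    have d4 : HasDerivAt (fun t : ℝ => sin ((α+β)*t + (θ₁+θ₂))) (cos ((α+β)*t + (θ₁+θ₂)) * (α+β)) t := by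
      have h : HasDerivAt (fun t : ℝ => (α+β)*t + (θ₁+θ₂)) (α+β) t := by
        simpa using ((hasDerivAt_id t).const_mul (α+β)).add_const (θ₁+θ₂)
      exact (Real.hasDerivAt_sin _).comp t h
    have dc : HasDerivAt (fun t : ℝ => c * t) c t := by
      simpa using (hasDerivAt_id t).const_mul c
    have hD := ((((dc.sub (d1.const_mul (P^2/(4*α)))).sub (d2.const_mul (Q^2/(4*β)))).add
        (d3.const_mul (P*Q/(α-β)))).sub (d4.const_mul (P*Q/(α+β))))
    convert hD using 1
    case e'_4 => exact rfl
    case e'_5 => exact rfl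
    case e'_8 => exact rfl
    have e1 : cos (2*(α*t+θ₁)) = 1 - 2 * sin (α*t+θ₁)^2 := by
      rw [Real.cos_two_mul]
      linear_combination 2 * (Real.sin_sq_add_cos_sq (α*t+θ₁))
    have e2 : cos (2*(β*t+θ₂)) = 1 - 2 * sin (β*t+θ₂)^2 := by
      rw [Real.cos_two_mul]
      linear_combination 2 * (Real.sin_sq_add_cos_sq (β*t+θ₂))
    have e3 : cos ((α-β)*t + (θ₁-θ₂)) - cos ((α+β)*t + (θ₁+θ₂))
        = 2 * (sin (α*t+θ₁) * sin (β*t+θ₂)) := by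
      rw [show ((α-β)*t + (θ₁-θ₂)) = (α*t+θ₁) - (β*t+θ₂) by ring,
        show ((α+β)*t + (θ₁+θ₂)) = (α*t+θ₁) + (β*t+θ₂) by ring,
        cos_sub (α*t+θ₁) (β*t+θ₂), cos_add (α*t+θ₁) (β*t+θ₂)]
      ring
    have s1 : P^2/(4*α) * (cos (2*(α*t+θ₁)) * (2*α)) = P^2/2 * (1 - 2*sin (α*t+θ₁)^2) := by
      rw [e1]; field_simp; ring
    have s2 : Q^2/(4*β) * (cos (2*(β*t+θ₂)) * (2*β)) = Q^2/2 * (1 - 2*sin (β*t+θ₂)^2) := by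
      rw [e2]; field_simp; ring
    have s3 : P*Q/(α-β) * (cos ((α-β)*t + (θ₁-θ₂)) * (α-β)) = P*Q * cos ((α-β)*t + (θ₁-θ₂)) := by
      field_simp
    have s4 : P*Q/(α+β) * (cos ((α+β)*t + (θ₁+θ₂)) * (α+β)) = P*Q * cos ((α+β)*t + (θ₁+θ₂)) := by
      field_simp
    rw [s1, s2, s3, s4, hc]
    linear_combination (-(P*Q)) * e3
  have hcont : Continuous fun s => (P * sin (α*s+θ₁) + Q * sin (β*s+θ₂))^2 := by
    fun_prop
  have hint : ∀ t : ℝ, (∫ s in (0:ℝ)..t, (P * sin (α*s+θ₁) + Q * sin (β*s+θ₂))^2) = F t - F 0 := by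
    intro t
    exact intervalIntegral.integral_eq_sub_of_hasDerivAt (fun x _ => hderiv x)
      (hcont.intervalIntegrable 0 t)
  set C : ℝ := |P^2/(4*α)| + |Q^2/(4*β)| + |P*Q/(α-β)| + |P*Q/(α+β)| with hC
  have habs : ∀ a x : ℝ, |a * sin x| ≤ |a| := by
    intro a x
    rw [abs_mul]
    exact mul_le_of_le_one_right (abs_nonneg a) (abs_sin_le_one x)
  have hFb : ∀ t : ℝ, |F t - c * t| ≤ C := by
    intro t
    have h1 := abs_le.mp (habs (P^2/(4*α)) (2*(α*t+θ₁)))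
    have h2 := abs_le.mp (habs (Q^2/(4*β)) (2*(β*t+θ₂)))
    have h3 := abs_le.mp (habs (P*Q/(α-β)) ((α-β)*t + (θ₁-θ₂)))
    have h4 := abs_le.mp (habs (P*Q/(α+β)) ((α+β)*t + (θ₁+θ₂)))
    rw [abs_le]
    constructor <;> simp only [hF] <;> [linarith [h1.1,h2.1,h3.1,h4.1]; linarith [h1.2,h2.2,h3.2,h4.2]]
  have hbound : ∀ t : ℝ, c * t - 2*C ≤ ∫ s in (0:ℝ)..t, (P * sin (α*s+θ₁) + Q * sin (β*s+θ₂))^2 := by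
    intro t
    rw [hint t]
    have h1 := abs_le.mp (hFb t)
    have h2 := abs_le.mp (hFb 0)
    have : c * 0 = 0 := by ring
    linarith [h1.1, h2.2]
  have hlin : Tendsto (fun t : ℝ => c * t - 2*C) atTop atTop := by
    apply tendsto_atTop_add_const_right
    exact (tendsto_id.const_mul_atTop hcpos)
  exact tendsto_atTop_mono hbound hlin


/-- Proposition 4: if `0 < d < π / max(ω₁, ω₂)` then the
determinant of the extended regressor for `N = 2` is not square integrable:
`∫_0^t (det Φ_e)² ds → ∞`. -/
theorem statement15 (B₁ B₂ ω₁ ω₂ phb₁ phb₂ d : ℝ)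
    (hB₁ : B₁ > 0) (hB₂ : B₂ > 0) (hω₁ : ω₁ > 0) (hω₂ : ω₂ > 0)
    (hω : ω₁ ≠ ω₂) (hd : 0 < d) (hd' : d < Real.pi / max ω₁ ω₂)
    (s₁ s₂ : ℝ → ℝ)
    (hs₁ : ∀ t, s₁ t = B₁ * Real.sin (ω₁ * t + phb₁))
    (hs₂ : ∀ t, s₂ t = B₂ * Real.sin (ω₂ * t + phb₂))
    (ξ₁ ξ₃ : ℝ → ℝ)
    (hξ₁ : ∀ t, ξ₁ t = s₁ t + s₂ t)
    (hξ₃ : ∀ t, ξ₃ t = -(ω₁ ^ 2 * s₁ t + ω₂ ^ 2 * s₂ t))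
    (Φe : ℝ → Matrix (Fin 2) (Fin 2) ℝ)
    (hΦe : ∀ t, Φe t = !![ξ₃ t, ξ₁ t; ξ₃ (t - d), ξ₁ (t - d)]) :
    Filter.Tendsto (fun t => ∫ s in (0 : ℝ)..t, ((Φe s).det) ^ 2)
      Filter.atTop Filter.atTop := by
  set p : ℝ := ω₁*d/2 with hp
  set q : ℝ := ω₂*d/2 with hq
  set P : ℝ := -((ω₂^2-ω₁^2)*B₁*B₂*sin (p+q)) with hP
  set Q : ℝ := (ω₂^2-ω₁^2)*B₁*B₂*sin (p-q) with hQdef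
  set α : ℝ := ω₁-ω₂ with hαdef
  set β : ℝ := ω₁+ω₂ with hβdef
  set θ₁ : ℝ := phb₁-phb₂-(p-q) with hθ₁
  set θ₂ : ℝ := phb₁+phb₂-(p+q) with hθ₂
  have hdet : ∀ s : ℝ, (Φe s).det = P * sin (α*s+θ₁) + Q * sin (β*s+θ₂) := by
    intro s
    rw [hΦe, Matrix.det_fin_two_of, hξ₁, hξ₁, hξ₃, hξ₃, hs₁, hs₁, hs₂, hs₂]
    have hk := key (ω₁*s+phb₁) (ω₂*s+phb₂) p q
    rw [show ω₂*s+phb₂ - 2*q = ω₂*(s-d)+phb₂ by rw [hq]; ring,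
        show ω₁*s+phb₁ - 2*p = ω₁*(s-d)+phb₁ by rw [hp]; ring,
        show ω₁*s+phb₁ - (ω₂*s+phb₂) - p + q = α*s+θ₁ by rw [hθ₁, hαdef]; ring,
        show ω₁*s+phb₁ + (ω₂*s+phb₂) - p - q = β*s+θ₂ by rw [hθ₂, hβdef]; ring] at hk
    rw [hP, hQdef]
    linear_combination ((ω₂^2-ω₁^2)*B₁*B₂) * hk
  have hmax : 0 < max ω₁ ω₂ := lt_max_of_lt_left hω₁
  have hdmax : (max ω₁ ω₂) * d < Real.pi := by
    rw [lt_div_iff₀ hmax] at hd'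
    linarith
  have hsinpq : sin (p-q) ≠ 0 := by
    have h1 : |p - q| < Real.pi := by
      rw [hp, hq, abs_lt]
      have hle1 : ω₁ ≤ max ω₁ ω₂ := le_max_left _ _
      have hle2 : ω₂ ≤ max ω₁ ω₂ := le_max_right _ _
      have := Real.pi_pos
      constructor <;> nlinarith
    have h2 : p - q ≠ 0 := by
      rw [hp, hq]
      intro h
      apply hω
      have : (ω₁ - ω₂) * d = 0 := by linarith
      rcases mul_eq_zero.mp this with h' | h'
      · linarith [sub_eq_zero.mp (by linarith : ω₁ - ω₂ = 0)]
      · exact absurd h' (ne_of_gt hd)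
    intro h
    rw [abs_lt] at h1
    exact h2 ((Real.sin_eq_zero_iff_of_lt_of_lt h1.1 h1.2).mp h)
  have hc : (ω₂^2-ω₁^2) ≠ 0 := by
    intro h
    apply hω
    nlinarith
  have hQ : Q ≠ 0 := by
    rw [hQdef]
    exact mul_ne_zero (mul_ne_zero (mul_ne_zero hc (ne_of_gt hB₁)) (ne_of_gt hB₂)) hsinpq
  have hα : α ≠ 0 := sub_ne_zero.mpr hω
  have hβ : β ≠ 0 := by rw [hβdef]; positivity
  have hab : α + β ≠ 0 := by rw [hαdef, hβdef]; intro h; nlinarith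
  have hab' : α - β ≠ 0 := by rw [hαdef, hβdef]; intro h; nlinarith
  have := divA P Q α β θ₁ θ₂ hα hβ hab hab' hQ
  simpa only [hdet] using this
end
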